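/- arXiv:2411.08765 — 6 statements merged into one kernel-verified Lean document; each statement's English description precedes it below -/
import Mathlib

section
/- For every 2^n × 2^n Hermitian matrix H and every a ∈ 𝔽₂^{2n}, the symplectic Fourier transform of p_H satisfies p̂_H(a) = 4^{-n} · tr(W_a H W_a H). -/
open scoped BigOperators ComplexOrder

/-- The phase space `𝔽₂^{2n}`, written as pairs `(a, b)` with `a, b ∈ 𝔽₂ⁿ`. -/
abbrev PhaseSpace (n : ℕ) := (Fin n → ZMod 2) × (Fin n → ZMod 2)

/-- The symplectic product `[x, y] = a·d + b·c` for `x = (a,b)`, `y = (c,d)`. -/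
def sympl {n : ℕ} (x y : PhaseSpace n) : ZMod 2 :=
  ∑ i, x.1 i * y.2 i + ∑ i, x.2 i * y.1 i

/-- The symplectic Fourier transform `f̂(a) = 4^{-n} ∑_x (-1)^{[a,x]} f(x)`. -/
noncomputable def sft {n : ℕ} (f : PhaseSpace n → ℝ) (a : PhaseSpace n) : ℝ :=
  (1 / 4 ^ n) * ∑ x, (-1 : ℝ) ^ (sympl a x).val * f x

/-- The symplectic complement of a set `S ⊆ 𝔽₂^{2n}`. -/
def symplComplement {n : ℕ} (S : Set (PhaseSpace n)) : Set (PhaseSpace n) :=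
  {x | ∀ a ∈ S, sympl x a = 0}

/-- The Weyl operator `W_x = i^{a·b} X^a Z^b` for `x = (a,b)`, as a `2^n × 2^n` matrix
indexed by `𝔽₂ⁿ`: `(W_x)_{k,j} = i^{a·b} (-1)^{b·j} [k = j + a]`. -/
noncomputable def Weyl {n : ℕ} (x : PhaseSpace n) :
    Matrix (Fin n → ZMod 2) (Fin n → ZMod 2) ℂ :=
  fun k j => Complex.I ^ (∑ i, (x.1 i).val * (x.2 i).val) *
    (if k = j + x.1 then (-1 : ℂ) ^ (∑ i, (x.2 i).val * (j i).val) else 0)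

/-- `p_H(x) = 2^{-n} tr(W_x H)²` (the trace is real for Hermitian `H`). -/
noncomputable def pFun {n : ℕ} (H : Matrix (Fin n → ZMod 2) (Fin n → ZMod 2) ℂ)
    (x : PhaseSpace n) : ℝ :=
  ((Weyl x * H).trace.re) ^ 2 / 2 ^ n

/-! ### Auxiliary lemmas -/

noncomputable def chi (z : ZMod 2) : ℂ := (-1 : ℂ) ^ z.val

lemma chi_add (u v : ZMod 2) : chi (u + v) = chi u * chi v := by
  unfold chi
  rw [← pow_add, neg_one_pow_eq_pow_mod_two, neg_one_pow_eq_pow_mod_two (n := u.val + v.val)]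
  congr 1
  fin_cases u <;> fin_cases v <;> decide

lemma chi_mul_self (u : ZMod 2) : chi u * chi u = 1 := by
  unfold chi
  rw [← pow_add, neg_one_pow_eq_pow_mod_two]
  rw [show (u.val + u.val) % 2 = 0 by fin_cases u <;> decide, pow_zero]

lemma val_mul (u v : ZMod 2) : (u * v).val = u.val * v.val := by
  fin_cases u <;> fin_cases v <;> decide

lemma chi_pow {ι : Type*} (s : Finset ι) (f : ι → ZMod 2) :
    ((-1 : ℂ)) ^ (∑ i ∈ s, (f i).val) = chi (∑ i ∈ s, f i) := by
  classical
  induction s using Finset.cons_induction with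
  | empty => simp [chi]
  | cons a s ha ih => rw [Finset.sum_cons, Finset.sum_cons, pow_add, chi_add, ih]; rfl

def Bform {n : ℕ} (u v : Fin n → ZMod 2) : ZMod 2 := ∑ i, u i * v i

lemma Bform_comm {n : ℕ} (u v : Fin n → ZMod 2) : Bform u v = Bform v u := by
  unfold Bform; exact Finset.sum_congr rfl fun i _ => mul_comm _ _

lemma Bform_add_left {n : ℕ} (u v w : Fin n → ZMod 2) :
    Bform (u + v) w = Bform u w + Bform v w := by
  unfold Bform
  rw [← Finset.sum_add_distrib]
  exact Finset.sum_congr rfl fun i _ => add_mul _ _ _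

lemma Bform_add_right {n : ℕ} (u v w : Fin n → ZMod 2) :
    Bform u (v + w) = Bform u v + Bform u w := by
  rw [Bform_comm, Bform_add_left, Bform_comm v u, Bform_comm w u]

lemma Bform_single {n : ℕ} (i : Fin n) (c : Fin n → ZMod 2) :
    Bform (Pi.single i 1) c = c i := by
  unfold Bform
  simp [Pi.single_apply]

lemma chi_zero : chi 0 = 1 := by simp [chi]

lemma addv_self {n : ℕ} (u : Fin n → ZMod 2) : u + u = 0 := by
  ext i; exact CharTwo.add_self_eq_zero (u i)

lemma addv_eq_zero_iff {n : ℕ} (u v : Fin n → ZMod 2) : u + v = 0 ↔ u = v := by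
  constructor
  · intro h
    have h2 : u + v + v = v := by rw [h, zero_add]
    rwa [add_assoc, addv_self, add_zero] at h2
  · intro h; rw [h, addv_self]

lemma orth {n : ℕ} (c : Fin n → ZMod 2) :
    ∑ b : Fin n → ZMod 2, chi (Bform b c) = if c = 0 then ((2 : ℂ) ^ n) else 0 := by
  classical
  split_ifs with hc
  · subst hc
    simp only [Bform, mul_zero, Pi.zero_apply, Finset.sum_const_zero, chi_zero,
      Finset.sum_const, Finset.card_univ, nsmul_eq_mul, mul_one]
    norm_num [Fintype.card_fun]
  · obtain ⟨i, hi⟩ := Function.ne_iff.mp hc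
    have hci : c i = 1 := by
      have h2 : c i ≠ 0 := by simpa using hi
      have : ∀ z : ZMod 2, z ≠ 0 → z = 1 := by decide
      exact this _ h2
    refine Finset.sum_involution (fun b _ => b + Pi.single i 1) ?_ ?_ ?_ ?_
    · intro b _
      rw [Bform_add_left, chi_add, Bform_single, hci]
      have : chi 1 = -1 := by simp [chi, ZMod.val_one]
      rw [this]; ring
    · intro b _ _
      intro h
      have := congrFun h i
      simp at this
    · intro b _; exact Finset.mem_univ _
    · intro b _
      show b + Pi.single i 1 + Pi.single i 1 = b
      rw [add_assoc, addv_self, add_zero]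

lemma sum_addRight {n : ℕ} {M : Type*} [AddCommMonoid M] (g : Fin n → ZMod 2)
    (f : (Fin n → ZMod 2) → M) : ∑ j, f (j + g) = ∑ j, f j :=
  Fintype.sum_equiv (Equiv.addRight g) _ _ (fun _ => rfl)

lemma sum_addLeft {n : ℕ} {M : Type*} [AddCommMonoid M] (g : Fin n → ZMod 2)
    (f : (Fin n → ZMod 2) → M) : ∑ j, f (g + j) = ∑ j, f j :=
  Fintype.sum_equiv (Equiv.addLeft g) _ _ (fun _ => rfl)

lemma neg_pow_eq_chi {n : ℕ} (u v : Fin n → ZMod 2) :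
    ((-1 : ℂ)) ^ (∑ i, (u i).val * (v i).val) = chi (Bform u v) := by
  have : (∑ i, (u i).val * (v i).val) = ∑ i, ((u i) * (v i)).val :=
    Finset.sum_congr rfl fun i _ => (val_mul _ _).symm
  rw [this, chi_pow]; rfl

lemma I_pow_mul_self {n : ℕ} (u v : Fin n → ZMod 2) :
    Complex.I ^ (∑ i, (u i).val * (v i).val) * Complex.I ^ (∑ i, (u i).val * (v i).val)
      = chi (Bform u v) := by
  rw [← pow_add, ← two_mul, pow_mul, Complex.I_sq, neg_pow_eq_chi]

lemma trace_Weyl_mul {n : ℕ} (x : PhaseSpace n)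
    (H : Matrix (Fin n → ZMod 2) (Fin n → ZMod 2) ℂ) :
    (Weyl x * H).trace =
      Complex.I ^ (∑ i, (x.1 i).val * (x.2 i).val) *
        ∑ j, chi (Bform x.2 j) * H j (j + x.1) := by
  rw [Matrix.trace]
  simp only [Matrix.diag_apply, Matrix.mul_apply, Weyl, ite_mul, zero_mul, mul_ite, mul_zero]
  rw [Finset.sum_comm, Finset.mul_sum]
  refine Finset.sum_congr rfl fun j _ => ?_
  rw [Finset.sum_ite_eq' Finset.univ (j + x.1)]
  simp [neg_pow_eq_chi, mul_assoc, mul_comm (chi (Bform x.2 j)) _, mul_left_comm]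

lemma WeylH_apply {n : ℕ} (a : PhaseSpace n)
    (H : Matrix (Fin n → ZMod 2) (Fin n → ZMod 2) ℂ) (p r : Fin n → ZMod 2) :
    (Weyl a * H) p r =
      Complex.I ^ (∑ i, (a.1 i).val * (a.2 i).val) *
        (chi (Bform a.2 (p + a.1)) * H (p + a.1) r) := by
  rw [Matrix.mul_apply]
  simp only [Weyl, ite_mul, zero_mul, mul_ite, mul_zero]
  have hcond : ∀ q : Fin n → ZMod 2, (p = q + a.1) ↔ (q = p + a.1) := by
    intro q
    constructor
    · intro h; rw [h, add_assoc, addv_self, add_zero]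
    · intro h; rw [h, add_assoc, addv_self, add_zero]
  simp only [hcond]
  rw [Finset.sum_ite_eq' Finset.univ (p + a.1)]
  simp only [Finset.mem_univ, if_true, neg_pow_eq_chi, mul_assoc]

lemma trace_mul_eq {N : Type*} [Fintype N] (A B : Matrix N N ℂ) :
    (A * B).trace = ∑ p, ∑ r, A p r * B r p := by
  simp [Matrix.trace, Matrix.mul_apply, Matrix.diag]

lemma trace_RHS {n : ℕ} (a : PhaseSpace n)
    (H : Matrix (Fin n → ZMod 2) (Fin n → ZMod 2) ℂ) :
    (Weyl a * H * Weyl a * H).trace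
      = ∑ j, ∑ k, chi (Bform a.2 (j + k)) * (H j k * H (a.1 + k) (a.1 + j)) := by
  have hM : Weyl a * H * Weyl a * H = (Weyl a * H) * (Weyl a * H) := by
    rw [Matrix.mul_assoc]
  rw [hM, trace_mul_eq]
  calc ∑ p, ∑ r, (Weyl a * H) p r * (Weyl a * H) r p
      = ∑ j, ∑ r, (Weyl a * H) (j + a.1) r * (Weyl a * H) r (j + a.1) :=
        (sum_addRight a.1 fun p => ∑ r, (Weyl a * H) p r * (Weyl a * H) r p).symm
    _ = ∑ j, ∑ k, chi (Bform a.2 (j + k)) * (H j k * H (a.1 + k) (a.1 + j)) := by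
        refine Finset.sum_congr rfl fun j _ => Finset.sum_congr rfl fun k _ => ?_
        rw [WeylH_apply, WeylH_apply]
        rw [show j + a.1 + a.1 = j from by rw [add_assoc, addv_self, add_zero]]
        rw [Bform_add_right a.2 k a.1, chi_add, Bform_add_right a.2 j k, chi_add,
          add_comm a.1 k, add_comm a.1 j]
        have key0 : Complex.I ^ (∑ i, (a.1 i).val * (a.2 i).val) *
            Complex.I ^ (∑ i, (a.1 i).val * (a.2 i).val) * chi (Bform a.2 a.1) = 1 := by
          rw [I_pow_mul_self, Bform_comm a.1 a.2, chi_mul_self]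
        linear_combination (chi (Bform a.2 j) * chi (Bform a.2 k) *
          (H j k * H (k + a.1) (j + a.1))) * key0

lemma key_sum {n : ℕ} (H : Matrix (Fin n → ZMod 2) (Fin n → ZMod 2) ℂ)
    (a : PhaseSpace n) :
    ∑ x : PhaseSpace n, chi (sympl a x) * ((Weyl x * H).trace) ^ 2
      = (2 : ℂ) ^ n * (Weyl a * H * Weyl a * H).trace := by
  classical
  have step1 : ∀ x : PhaseSpace n,
      chi (sympl a x) * ((Weyl x * H).trace) ^ 2
        = ∑ j, ∑ k, chi (Bform x.2 (a.1 + x.1 + j + k)) *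
            (chi (Bform a.2 x.1) * (H j (j + x.1) * H k (k + x.1))) := by
    intro x
    rw [trace_Weyl_mul, mul_pow, pow_two (Complex.I ^ _), I_pow_mul_self, pow_two,
      Finset.sum_mul_sum, ← mul_assoc, Finset.mul_sum]
    refine Finset.sum_congr rfl fun j _ => ?_
    rw [Finset.mul_sum]
    refine Finset.sum_congr rfl fun k _ => ?_
    have hs : sympl a x = Bform a.1 x.2 + Bform a.2 x.1 := rfl
    rw [hs, chi_add, Bform_add_right, Bform_add_right, Bform_add_right,
      chi_add, chi_add, chi_add, Bform_comm x.2 a.1, Bform_comm x.2 x.1]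
    ring
  have step2 : ∀ α : Fin n → ZMod 2,
      (∑ β, ∑ j, ∑ k, chi (Bform β (a.1 + α + j + k)) *
          (chi (Bform a.2 α) * (H j (j + α) * H k (k + α))))
        = ∑ j, (2 : ℂ) ^ n *
            (chi (Bform a.2 α) * (H j (j + α) * H (a.1 + α + j) (a.1 + j))) := by
    intro α
    rw [Finset.sum_comm]
    refine Finset.sum_congr rfl fun j _ => ?_
    rw [Finset.sum_comm]
    have inner : ∀ k, (∑ β, chi (Bform β (a.1 + α + j + k)) *
        (chi (Bform a.2 α) * (H j (j + α) * H k (k + α))))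
        = (if a.1 + α + j = k then
            (2 : ℂ) ^ n * (chi (Bform a.2 α) * (H j (j + α) * H k (k + α))) else 0) := by
      intro k
      rw [← Finset.sum_mul, orth, if_congr (addv_eq_zero_iff (a.1 + α + j) k) rfl rfl,
        ite_mul, zero_mul]
    simp only [inner]
    rw [Finset.sum_ite_eq Finset.univ (a.1 + α + j)]
    simp only [Finset.mem_univ, if_true]
    rw [show a.1 + α + j + α = a.1 + j + (α + α) from by abel, addv_self, add_zero]
  calc ∑ x : PhaseSpace n, chi (sympl a x) * ((Weyl x * H).trace) ^ 2
      = ∑ α, ∑ β, chi (sympl a (α, β)) * ((Weyl (α, β) * H).trace) ^ 2 :=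
        Fintype.sum_prod_type _
    _ = ∑ α, ∑ β, ∑ j, ∑ k, chi (Bform β (a.1 + α + j + k)) *
          (chi (Bform a.2 α) * (H j (j + α) * H k (k + α))) :=
        Finset.sum_congr rfl fun α _ => Finset.sum_congr rfl fun β _ => step1 (α, β)
    _ = ∑ α, ∑ j, (2 : ℂ) ^ n *
          (chi (Bform a.2 α) * (H j (j + α) * H (a.1 + α + j) (a.1 + j))) :=
        Finset.sum_congr rfl fun α _ => step2 α
    _ = ∑ j, ∑ α, (2 : ℂ) ^ n *
          (chi (Bform a.2 α) * (H j (j + α) * H (a.1 + α + j) (a.1 + j))) :=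
        Finset.sum_comm
    _ = ∑ j, ∑ k, (2 : ℂ) ^ n *
          (chi (Bform a.2 (j + k)) * (H j k * H (a.1 + k) (a.1 + j))) := by
        refine Finset.sum_congr rfl fun j _ => ?_
        rw [← sum_addLeft j (fun α => (2 : ℂ) ^ n *
          (chi (Bform a.2 α) * (H j (j + α) * H (a.1 + α + j) (a.1 + j))))]
        refine Finset.sum_congr rfl fun k _ => ?_
        rw [show j + (j + k) = k + (j + j) from by abel, addv_self, add_zero,
          show a.1 + (j + k) + j = a.1 + k + (j + j) from by abel, addv_self, add_zero]
    _ = (2 : ℂ) ^ n * ∑ j, ∑ k, chi (Bform a.2 (j + k)) *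
          (H j k * H (a.1 + k) (a.1 + j)) := by
        rw [Finset.mul_sum]
        exact Finset.sum_congr rfl fun j _ => (Finset.mul_sum _ _ _).symm
    _ = (2 : ℂ) ^ n * (Weyl a * H * Weyl a * H).trace := by rw [trace_RHS]

lemma trace_real {n : ℕ} {H : Matrix (Fin n → ZMod 2) (Fin n → ZMod 2) ℂ}
    (hH : H.IsHermitian) (x : PhaseSpace n) :
    (((Weyl x * H).trace.re : ℝ) : ℂ) = (Weyl x * H).trace := by
  rw [← Complex.conj_eq_iff_re]
  have hconj : ∀ j k, (starRingEnd ℂ) (H j k) = H k j := fun j k => by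
    rw [← hH.apply k j]; rfl
  rw [trace_Weyl_mul, map_mul, map_sum, map_pow, Complex.conj_I]
  have h1 : (-Complex.I) ^ (∑ i, (x.1 i).val * (x.2 i).val)
      = chi (Bform x.1 x.2) * Complex.I ^ (∑ i, (x.1 i).val * (x.2 i).val) := by
    rw [neg_pow, neg_pow_eq_chi]
  have h2 : ∀ j, (starRingEnd ℂ) (chi (Bform x.2 j) * H j (j + x.1))
      = chi (Bform x.2 j) * H (j + x.1) j := by
    intro j
    rw [map_mul, hconj]
    congr 1
    unfold chi
    rw [map_pow, map_neg, map_one]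
  simp only [h2]
  rw [h1]
  have h3 : (∑ j, chi (Bform x.2 j) * H (j + x.1) j)
      = chi (Bform x.2 x.1) * ∑ j, chi (Bform x.2 j) * H j (j + x.1) := by
    rw [← sum_addRight x.1 (fun j => chi (Bform x.2 j) * H (j + x.1) j), Finset.mul_sum]
    refine Finset.sum_congr rfl fun j _ => ?_
    rw [show j + x.1 + x.1 = j from by rw [add_assoc, addv_self, add_zero],
      Bform_add_right, chi_add]
    ring
  rw [h3]
  have h4 : chi (Bform x.1 x.2) * chi (Bform x.2 x.1) = 1 := by
    rw [Bform_comm x.1 x.2, chi_mul_self]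
  calc chi (Bform x.1 x.2) * Complex.I ^ (∑ i, (x.1 i).val * (x.2 i).val) *
        (chi (Bform x.2 x.1) * ∑ j, chi (Bform x.2 j) * H j (j + x.1))
      = (chi (Bform x.1 x.2) * chi (Bform x.2 x.1)) *
          (Complex.I ^ (∑ i, (x.1 i).val * (x.2 i).val) *
            ∑ j, chi (Bform x.2 j) * H j (j + x.1)) := by ring
    _ = _ := by rw [h4, one_mul]

/-- For every 2^n × 2^n Hermitian matrix H and every a ∈ 𝔽₂^{2n},
p̂_H(a) = 4^{-n} · tr(W_a H W_a H). -/
theorem sft_pFun_eq {n : ℕ} (H : Matrix (Fin n → ZMod 2) (Fin n → ZMod 2) ℂ)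
    (hH : H.IsHermitian) (a : PhaseSpace n) :
    ((sft (pFun H) a : ℝ) : ℂ) = (1 / 4 ^ n) * (Weyl a * H * Weyl a * H).trace := by
  unfold sft pFun
  push_cast
  have hterm : ∀ x : PhaseSpace n,
      (-1 : ℂ) ^ (sympl a x).val * ((((Weyl x * H).trace.re : ℝ) : ℂ) ^ 2 / 2 ^ n)
        = chi (sympl a x) * ((Weyl x * H).trace) ^ 2 / 2 ^ n := by
    intro x
    rw [trace_real hH x]
    rw [chi]
    ring
  rw [Finset.sum_congr rfl fun x _ => hterm x]
  rw [← Finset.sum_div, key_sum H a]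
  have h2 : ((2 : ℂ) ^ n) ≠ 0 := by positivity
  field_simp
end

section
/- For every n-qubit mixed state ρ and every x ∈ 𝔽₂^{2n}, the symplectic Fourier coefficient p̂_ρ(x) satisfies 0 ≤ p̂_ρ(x) ≤ 4^{-n}. -/
open scoped BigOperators ComplexOrder

namespace QProof

open Matrix

/-- parity helper -/
lemma neg_one_pow_congr {m k : ℕ} (h : (m : ZMod 2) = (k : ZMod 2)) :
    (-1 : ℂ) ^ m = (-1 : ℂ) ^ k := by
  have hm : ∀ p : ℕ, (-1 : ℂ) ^ p = (-1) ^ (p % 2) := by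
    intro p
    conv_lhs => rw [← Nat.div_add_mod p 2]
    rw [pow_add, pow_mul, neg_one_sq, one_pow, one_mul]
  have h2 : m % 2 = k % 2 := by
    have := (ZMod.natCast_eq_natCast_iff m k 2).mp h
    exact this
  rw [hm m, hm k, h2]

@[simp] lemma cast_val_zmod2 (z : ZMod 2) : ((z.val : ZMod 2)) = z := by
  have := ZMod.natCast_val (n := 2) (R := ZMod 2) z
  simpa [ZMod.cast_id] using this

/-- the character -/
noncomputable def chi {n : ℕ} (u v : Fin n → ZMod 2) : ℂ :=
  (-1 : ℂ) ^ (∑ i, (u i).val * (v i).val)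

lemma chi_comm {n : ℕ} (u v : Fin n → ZMod 2) : chi u v = chi v u := by
  unfold chi
  congr 1
  exact Finset.sum_congr rfl fun i _ => Nat.mul_comm _ _

lemma chi_add_right {n : ℕ} (u v w : Fin n → ZMod 2) :
    chi u (v + w) = chi u v * chi u w := by
  unfold chi
  rw [← pow_add]
  apply neg_one_pow_congr
  push_cast
  rw [← Finset.sum_add_distrib]
  apply Finset.sum_congr rfl
  intro i _
  simp [Pi.add_apply]
  ring

lemma chi_add_left {n : ℕ} (u v w : Fin n → ZMod 2) :
    chi (u + v) w = chi u w * chi v w := by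
  rw [chi_comm, chi_add_right, chi_comm w u, chi_comm w v]

lemma chi_mul_self {n : ℕ} (u v : Fin n → ZMod 2) : chi u v * chi u v = 1 := by
  unfold chi
  rw [← pow_add]
  have : (-1 : ℂ) ^ (0 : ℕ) = 1 := pow_zero _
  rw [← this]
  apply neg_one_pow_congr
  push_cast
  ring_nf
  rw [show (2 : ZMod 2) = 0 by decide, mul_zero]

lemma chi_sum {n : ℕ} (u : Fin n → ZMod 2) :
    ∑ v : Fin n → ZMod 2, chi u v = if u = 0 then (2 : ℂ) ^ n else 0 := by
  by_cases hu : u = 0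
  · subst hu
    simp only [if_pos rfl]
    have h1 : ∀ v : Fin n → ZMod 2, chi (0 : Fin n → ZMod 2) v = 1 := by
      intro v; unfold chi; simp
    simp only [h1, Finset.sum_const, Finset.card_univ]
    have : Fintype.card (Fin n → ZMod 2) = 2 ^ n := by
      simp [Fintype.card_fun]
    rw [this]; push_cast; ring
  · rw [if_neg hu]
    obtain ⟨i, hi⟩ : ∃ i, u i ≠ 0 := by
      by_contra h
      push_neg at h
      exact hu (funext fun i => h i)
    set δ : Fin n → ZMod 2 := fun j => if j = i then 1 else 0 with hδ
    have key : ∑ v : Fin n → ZMod 2, chi u v = ∑ v : Fin n → ZMod 2, chi u (v + δ) :=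
      (Fintype.sum_equiv (Equiv.addRight δ) _ _ (fun v => rfl)).symm
    have hud : chi u δ = -1 := by
      unfold chi
      have hui : u i = 1 := by
        revert hi
        generalize u i = z
        fin_cases z
        · intro hz; exact absurd rfl hz
        · intro _; rfl
      have hs : (∑ j, (u j).val * (δ j).val) = 1 := by
        rw [Finset.sum_eq_single i]
        · simp [hδ, hui, show (1 : ZMod 2).val = 1 from rfl]
        · intro b _ hb; simp [hδ, hb]
        · intro h; exact absurd (Finset.mem_univ i) h
      rw [hs, pow_one]
    have flip : ∀ v, chi u (v + δ) = - chi u v := by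
      intro v
      rw [chi_add_right, hud, mul_neg_one]
    rw [Finset.sum_congr rfl (fun v _ => flip v), Finset.sum_neg_distrib] at key
    linear_combination key / 2



noncomputable def omg {n : ℕ} (x : PhaseSpace n) : ℂ :=
  Complex.I ^ (∑ i, (x.1 i).val * (x.2 i).val)

lemma weyl_apply {n : ℕ} (x : PhaseSpace n) (k j : Fin n → ZMod 2) :
    Weyl x k j = omg x * (if k = j + x.1 then chi x.2 j else 0) := rfl

lemma omg_sq {n : ℕ} (x : PhaseSpace n) : omg x * omg x = chi x.1 x.2 := by
  unfold omg chi
  rw [← mul_pow, Complex.I_mul_I]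

lemma addv {n : ℕ} (v : Fin n → ZMod 2) : v + v = 0 := by
  funext i
  exact CharTwo.add_self_eq_zero (v i)

lemma eqv_add {n : ℕ} (k m a : Fin n → ZMod 2) : (k = m + a) ↔ (m = k + a) := by
  constructor <;> intro h <;> subst h <;> rw [add_assoc, addv, add_zero]


lemma weyl_mul_apply {n : ℕ} (x : PhaseSpace n)
    (M : Matrix (Fin n → ZMod 2) (Fin n → ZMod 2) ℂ) (k j : Fin n → ZMod 2) :
    (Weyl x * M) k j = omg x * chi x.2 (k + x.1) * M (k + x.1) j := by
  rw [Matrix.mul_apply]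
  have h1 : ∀ m : Fin n → ZMod 2, Weyl x k m * M m j
      = if m = k + x.1 then omg x * chi x.2 m * M m j else 0 := by
    intro m
    rw [weyl_apply]
    by_cases h : m = k + x.1
    · have h' : k = m + x.1 := (eqv_add k m x.1).mpr h
      rw [if_pos h', if_pos h]
    · have h' : ¬ k = m + x.1 := fun hc => h ((eqv_add k m x.1).mp hc)
      rw [if_neg h', if_neg h, mul_zero, zero_mul]
  rw [Finset.sum_congr rfl fun m _ => h1 m, Finset.sum_ite_eq' Finset.univ]
  simp

lemma sum_reindex {n : ℕ} (a : Fin n → ZMod 2) (F : (Fin n → ZMod 2) → ℂ) :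
    (∑ k, F k) = ∑ j, F (j + a) :=
  (Fintype.sum_equiv (Equiv.addRight a) _ _ (fun j => rfl)).symm

lemma add_add_cancel {n : ℕ} (j a : Fin n → ZMod 2) : j + a + a = j := by
  rw [add_assoc, addv, add_zero]

lemma trace_weyl_mul {n : ℕ} (x : PhaseSpace n)
    (M : Matrix (Fin n → ZMod 2) (Fin n → ZMod 2) ℂ) :
    (Weyl x * M).trace = omg x * ∑ j, chi x.2 j * M j (j + x.1) := by
  rw [Matrix.trace, Finset.mul_sum, sum_reindex x.1]
  apply Finset.sum_congr rfl
  intro k _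
  rw [Matrix.diag_apply, weyl_mul_apply, add_add_cancel]
  ring

lemma trace_weyl_four {n : ℕ} (x : PhaseSpace n)
    (M : Matrix (Fin n → ZMod 2) (Fin n → ZMod 2) ℂ) :
    (Weyl x * M * Weyl x * M).trace
      = chi x.1 x.2 * ∑ j, ∑ l, chi x.2 j * chi x.2 l * M j (l + x.1) * M l (j + x.1) := by
  have hW : Weyl x * M * Weyl x * M = (Weyl x * M) * (Weyl x * M) := by
    rw [Matrix.mul_assoc]
  rw [hW, Matrix.trace, Finset.mul_sum]
  have hd : ∀ k, ((Weyl x * M) * (Weyl x * M)).diag k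
      = ∑ l, omg x * chi x.2 (k + x.1) * M (k + x.1) l
          * (omg x * chi x.2 (l + x.1) * M (l + x.1) k) := by
    intro k
    rw [Matrix.diag_apply, Matrix.mul_apply]
    exact Finset.sum_congr rfl fun l _ => by rw [weyl_mul_apply, weyl_mul_apply]
  rw [Finset.sum_congr rfl fun k _ => hd k]
  rw [Finset.sum_comm]
  -- reindex k ↦ j + x.1 and l ↦ l + x.1 on the left
  rw [sum_reindex x.1]
  apply Finset.sum_congr rfl
  intro j _
  rw [Finset.mul_sum, sum_reindex x.1]
  apply Finset.sum_congr rfl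
  intro l _
  rw [add_add_cancel, add_add_cancel]
  ring_nf
  rw [show omg x ^ 2 = chi x.1 x.2 by rw [pow_two, omg_sq]]
  ring


lemma two_eq_zero_pi {n : ℕ} : (2 : Fin n → ZMod 2) = 0 := funext fun i => by
  show (2 : ZMod 2) = 0
  decide

lemma sign_eq {n : ℕ} (x y : PhaseSpace n) :
    (-1 : ℂ) ^ ((sympl x y).val) = chi x.1 y.2 * chi x.2 y.1 := by
  unfold chi
  rw [← pow_add]
  apply neg_one_pow_congr
  rw [cast_val_zmod2]
  unfold sympl
  push_cast
  simp only [cast_val_zmod2]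

lemma chi_sum' {n : ℕ} (e : Fin n → ZMod 2) :
    ∑ d : Fin n → ZMod 2, chi d e = if e = 0 then (2 : ℂ) ^ n else 0 := by
  rw [Finset.sum_congr rfl fun d _ => chi_comm d e]
  exact chi_sum e

lemma key_sum {n : ℕ} (x : PhaseSpace n) (M : Matrix (Fin n → ZMod 2) (Fin n → ZMod 2) ℂ) :
    ∑ y : PhaseSpace n, (-1 : ℂ) ^ ((sympl x y).val) * ((Weyl y * M).trace) ^ 2
      = 2 ^ n * (Weyl x * M * Weyl x * M).trace := by
  rw [trace_weyl_four, Fintype.sum_prod_type]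
  have term : ∀ c d : Fin n → ZMod 2,
      (-1 : ℂ) ^ ((sympl x (c, d)).val) * ((Weyl (c, d) * M).trace) ^ 2
      = ∑ j, ∑ l, (chi x.2 c * M j (j + c) * M l (l + c)) * chi d (x.1 + c + j + l) := by
    intro c d
    rw [sign_eq, trace_weyl_mul, mul_pow]
    rw [show omg (c, d) ^ 2 = chi c d from by rw [pow_two]; exact omg_sq (c, d)]
    rw [pow_two, Finset.sum_mul_sum]
    simp only [Finset.mul_sum]
    apply Finset.sum_congr rfl
    intro j _
    apply Finset.sum_congr rfl
    intro l _
    rw [chi_add_right, chi_add_right, chi_add_right, chi_comm d x.1, chi_comm d c]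
    ring
  rw [Finset.sum_congr rfl fun c _ => Finset.sum_congr rfl fun d _ => term c d]
  have cond : ∀ v l : Fin n → ZMod 2, (v + l = 0) ↔ (l = v) := by
    intro v l
    constructor
    · intro h
      have h2 : v + (v + l) = v + 0 := by rw [h]
      rwa [← add_assoc, addv, zero_add, add_zero] at h2
    · intro h
      rw [h]
      exact addv v
  have stepA : ∀ c : Fin n → ZMod 2,
      (∑ d : Fin n → ZMod 2, ∑ j, ∑ l,
        (chi x.2 c * M j (j + c) * M l (l + c)) * chi d (x.1 + c + j + l))
      = ∑ j, (chi x.2 c * M j (j + c) * M (x.1 + c + j) ((x.1 + c + j) + c)) * 2 ^ n := by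
    intro c
    rw [Finset.sum_comm]
    apply Finset.sum_congr rfl
    intro j _
    rw [Finset.sum_comm]
    have inner : ∀ l, (∑ d : Fin n → ZMod 2,
        (chi x.2 c * M j (j + c) * M l (l + c)) * chi d (x.1 + c + j + l))
        = if l = x.1 + c + j then (chi x.2 c * M j (j + c) * M l (l + c)) * 2 ^ n else 0 := by
      intro l
      rw [← Finset.mul_sum, chi_sum']
      by_cases h : l = x.1 + c + j
      · have h0 : x.1 + c + j + l = 0 := by rw [h]; exact addv _
        rw [if_pos h0, if_pos h]
      · have h0 : ¬ x.1 + c + j + l = 0 := fun hc => h ((cond _ _).mp hc)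
        rw [if_neg h0, if_neg h, mul_zero]
    rw [Finset.sum_congr rfl fun l _ => inner l, Finset.sum_ite_eq' Finset.univ]
    simp
  rw [Finset.sum_congr rfl fun c _ => stepA c]
  rw [Finset.sum_comm]
  simp only [Finset.mul_sum]
  apply Finset.sum_congr rfl
  intro j _
  rw [sum_reindex (x.1 + j)]
  apply Finset.sum_congr rfl
  intro l _
  have htwo : (2 : Fin n → ZMod 2) = 0 := two_eq_zero_pi
  have hthree : (3 : Fin n → ZMod 2) = 1 := funext fun i => by
    show (3 : ZMod 2) = 1
    decide
  have i1 : j + (l + (x.1 + j)) = l + x.1 := by ring_nf; rw [htwo]; ring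
  have i2 : x.1 + (l + (x.1 + j)) + j = l := by ring_nf; rw [htwo]; ring
  have i3 : l + (l + (x.1 + j)) = j + x.1 := by ring_nf; rw [htwo]; ring
  rw [i1, i2, i3, chi_add_right, chi_add_right, chi_comm x.1 x.2]
  ring


lemma star_chi {n : ℕ} (u v : Fin n → ZMod 2) : star (chi u v) = chi u v := by
  unfold chi
  rw [star_pow, star_neg, star_one]

lemma weyl_conjTranspose {n : ℕ} (x : PhaseSpace n) : (Weyl x)ᴴ = Weyl x := by
  ext k j
  rw [Matrix.conjTranspose_apply, weyl_apply, weyl_apply]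
  by_cases h : k = j + x.1
  · have h' : j = k + x.1 := (eqv_add k j x.1).mp h
    rw [if_pos h, if_pos h']
    rw [star_mul', star_chi]
    have hso : star (omg x) * chi x.2 x.1 = omg x := by
      unfold omg
      rw [star_pow, Complex.star_def, Complex.conj_I, chi_comm]
      unfold chi
      rw [← mul_pow]
      norm_num
    have hk : chi x.2 k = chi x.2 j * chi x.2 x.1 := by
      rw [h, chi_add_right]
    rw [hk]
    calc star (omg x) * (chi x.2 j * chi x.2 x.1)
        = (star (omg x) * chi x.2 x.1) * chi x.2 j := by ring
      _ = omg x * chi x.2 j := by rw [hso]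
  · have h' : ¬ j = k + x.1 := fun hc => h ((eqv_add k j x.1).mpr hc)
    rw [if_neg h, if_neg h']
    simp

lemma weyl_mul_weyl {n : ℕ} (x : PhaseSpace n) : Weyl x * Weyl x = 1 := by
  ext k j
  rw [weyl_mul_apply, weyl_apply, Matrix.one_apply]
  by_cases h : k = j
  · subst h
    rw [if_pos rfl, if_pos rfl]
    calc omg x * chi x.2 (k + x.1) * (omg x * chi x.2 k)
        = (omg x * omg x) * ((chi x.2 k * chi x.2 k) * chi x.2 x.1) := by
          rw [chi_add_right]; ring
      _ = 1 := by
          rw [omg_sq, chi_mul_self, one_mul, chi_comm, chi_mul_self]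
  · have h' : ¬ k + x.1 = j + x.1 := fun hc => h (add_right_cancel hc)
    rw [if_neg h, if_neg h']
    simp

lemma trace_weyl_real {n : ℕ} (x : PhaseSpace n)
    (M : Matrix (Fin n → ZMod 2) (Fin n → ZMod 2) ℂ) (hM : M.IsHermitian) :
    ((Weyl x * M).trace).im = 0 := by
  have h : (starRingEnd ℂ) ((Weyl x * M).trace) = (Weyl x * M).trace := by
    have h1 : ((Weyl x * M)ᴴ).trace = star ((Weyl x * M).trace) := Matrix.trace_conjTranspose _
    rw [Complex.star_def] at h1
    rw [← h1, Matrix.conjTranspose_mul, hM.eq, weyl_conjTranspose, Matrix.trace_mul_comm]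
  have := Complex.conj_eq_iff_im.mp h
  exact this


section PSD
variable {m : Type*} [Fintype m] [DecidableEq m]

lemma conj_mul_self' (z : ℂ) : (starRingEnd ℂ) z * z = ((‖z‖ : ℂ)) ^ 2 := by
  rw [mul_comm, Complex.mul_conj]
  norm_cast
  rw [Complex.normSq_eq_norm_sq]

lemma dot_star_self (v : m → ℂ) :
    star v ⬝ᵥ v = ((∑ i, ‖v i‖ ^ 2 : ℝ) : ℂ) := by
  push_cast
  apply Finset.sum_congr rfl
  intro i _
  simp only [dotProduct, Pi.star_apply, Complex.star_def]
  push_cast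
  simp only [conj_mul_self']

lemma diag_re_nonneg {A : Matrix m m ℂ} (hA : A.PosSemidef) (k : m) :
    0 ≤ (A k k).re := by
  have h := hA.re_dotProduct_nonneg (Pi.single k 1)
  have he : star (Pi.single k 1 : m → ℂ) ⬝ᵥ (A *ᵥ Pi.single k 1) = A k k := by
    simp [dotProduct, Matrix.mulVec, Pi.single_apply]
  rw [he] at h
  simpa using h

lemma trace_re_nonneg {A : Matrix m m ℂ} (hA : A.PosSemidef) : 0 ≤ A.trace.re := by
  rw [Matrix.trace, Complex.re_sum]
  exact Finset.sum_nonneg fun k _ => diag_re_nonneg hA k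

lemma psd_eq_conjTranspose_mul_self {A : Matrix m m ℂ} (hA : A.PosSemidef) :
    ∃ B : Matrix m m ℂ, A = Bᴴ * B := by
  open scoped MatrixOrder in
  obtain ⟨B, hB⟩ := CStarAlgebra.nonneg_iff_eq_star_mul_self.mp hA.nonneg
  exact ⟨B, by rw [hB, Matrix.star_eq_conjTranspose]⟩

lemma trace_mul_psd_re_nonneg {A B : Matrix m m ℂ}
    (hA : A.PosSemidef) (hB : B.PosSemidef) : 0 ≤ ((A * B).trace).re := by
  obtain ⟨C, hC⟩ := psd_eq_conjTranspose_mul_self hB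
  have h1 : (A * B).trace = (C * A * Cᴴ).trace := by
    rw [hC, show A * (Cᴴ * C) = (A * Cᴴ) * C from by rw [Matrix.mul_assoc],
      Matrix.trace_mul_comm, ← Matrix.mul_assoc]
  rw [h1]
  exact trace_re_nonneg (hA.mul_mul_conjTranspose_same C)

lemma one_sub_psd {A : Matrix m m ℂ} (hA : A.PosSemidef) (htr : A.trace = 1) :
    (1 - A : Matrix m m ℂ).PosSemidef := by
  obtain ⟨B, hB⟩ := psd_eq_conjTranspose_mul_self hA
  refine Matrix.posSemidef_iff_dotProduct_mulVec.mpr ⟨?_, ?_⟩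
  · exact Matrix.isHermitian_one.sub hA.1
  · intro v
    have hq : star v ⬝ᵥ (A *ᵥ v) = star (B *ᵥ v) ⬝ᵥ (B *ᵥ v) := by
      rw [hB, ← Matrix.mulVec_mulVec, Matrix.dotProduct_mulVec, ← Matrix.star_mulVec]
    have htrB : (∑ j, ∑ i, ‖B i j‖ ^ 2 : ℝ) = 1 := by
      have h2 : A.trace = ((∑ j, ∑ i, ‖B i j‖ ^ 2 : ℝ) : ℂ) := by
        rw [hB, Matrix.trace]
        push_cast
        apply Finset.sum_congr rfl
        intro j _
        rw [Matrix.diag_apply, Matrix.mul_apply]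
        push_cast
        apply Finset.sum_congr rfl
        intro i _
        rw [Matrix.conjTranspose_apply, Complex.star_def]
        push_cast
        simp only [conj_mul_self']
      rw [htr] at h2
      exact_mod_cast h2.symm
    set w := B *ᵥ v with hw
    have key : ∀ i, ‖w i‖ ^ 2 ≤ (∑ j, ‖B i j‖ ^ 2) * (∑ j, ‖v j‖ ^ 2) := by
      intro i
      have h1 : ‖w i‖ ≤ ∑ j, ‖B i j‖ * ‖v j‖ := by
        rw [hw]
        calc ‖∑ j, B i j * v j‖ ≤ ∑ j, ‖B i j * v j‖ := norm_sum_le _ _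
          _ = ∑ j, ‖B i j‖ * ‖v j‖ := by
              exact Finset.sum_congr rfl fun j _ => norm_mul _ _
      calc ‖w i‖ ^ 2 ≤ (∑ j, ‖B i j‖ * ‖v j‖) ^ 2 :=
            pow_le_pow_left₀ (norm_nonneg _) h1 2
        _ ≤ (∑ j, ‖B i j‖ ^ 2) * (∑ j, ‖v j‖ ^ 2) :=
            Finset.sum_mul_sq_le_sq_mul_sq _ _ _
    have total : (∑ i, ‖w i‖ ^ 2) ≤ ∑ j, ‖v j‖ ^ 2 := by
      calc (∑ i, ‖w i‖ ^ 2) ≤ ∑ i, (∑ j, ‖B i j‖ ^ 2) * (∑ j, ‖v j‖ ^ 2) :=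
            Finset.sum_le_sum fun i _ => key i
        _ = (∑ i, ∑ j, ‖B i j‖ ^ 2) * (∑ j, ‖v j‖ ^ 2) := (Finset.sum_mul _ _ _).symm
        _ = (∑ j, ∑ i, ‖B i j‖ ^ 2) * (∑ j, ‖v j‖ ^ 2) := by rw [Finset.sum_comm]
        _ = 1 * (∑ j, ‖v j‖ ^ 2) := by rw [htrB]
        _ = ∑ j, ‖v j‖ ^ 2 := one_mul _
    have hexp : star v ⬝ᵥ ((1 - A : Matrix m m ℂ) *ᵥ v)
        = star v ⬝ᵥ v - star v ⬝ᵥ (A *ᵥ v) := by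
      rw [Matrix.sub_mulVec, dotProduct_sub, Matrix.one_mulVec]
    rw [hexp, hq, dot_star_self, dot_star_self]
    rw [← Complex.ofReal_sub]
    rw [Complex.zero_le_real]
    exact sub_nonneg.mpr total

end PSD



end QProof

open QProof Matrix

/-- For every n-qubit mixed state ρ and every x ∈ 𝔽₂^{2n},
0 ≤ p̂_ρ(x) ≤ 4^{-n}. -/
theorem sft_pFun_nonneg_le {n : ℕ} (ρ : Matrix (Fin n → ZMod 2) (Fin n → ZMod 2) ℂ)
    (hρ : ρ.PosSemidef) (hτ : ρ.trace = 1) (x : PhaseSpace n) :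
    0 ≤ sft (pFun ρ) x ∧ sft (pFun ρ) x ≤ 1 / 4 ^ n := by
  have hherm : ρ.IsHermitian := hρ.1
  set σ := Weyl x * ρ * (Weyl x)ᴴ with hσ
  have hσpsd : σ.PosSemidef := hρ.mul_mul_conjTranspose_same (Weyl x)
  have hσtr : σ.trace = 1 := by
    rw [hσ, weyl_conjTranspose, Matrix.trace_mul_comm (Weyl x * ρ) (Weyl x),
      ← Matrix.mul_assoc, weyl_mul_weyl, one_mul, hτ]
  have hmain : sft (pFun ρ) x = ((σ * ρ).trace).re / 4 ^ n := by
    unfold sft pFun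
    have hsum : ∑ y, (-1 : ℝ) ^ ((sympl x y).val) * ((Weyl y * ρ).trace.re ^ 2 / 2 ^ n)
        = (1 / 2 ^ n) *
          (∑ y : PhaseSpace n, ((-1 : ℂ) ^ ((sympl x y).val) * ((Weyl y * ρ).trace) ^ 2)).re := by
      rw [Complex.re_sum, Finset.mul_sum]
      apply Finset.sum_congr rfl
      intro y _
      have him : ((Weyl y * ρ).trace).im = 0 := trace_weyl_real y ρ hherm
      have hcast : ((-1 : ℂ) ^ ((sympl x y).val)) = (((-1 : ℝ) ^ ((sympl x y).val) : ℝ) : ℂ) := by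
        push_cast
        ring
      rw [hcast, Complex.re_ofReal_mul,
        show ((Weyl y * ρ).trace) ^ 2 = (Weyl y * ρ).trace * (Weyl y * ρ).trace from sq _,
        Complex.mul_re, him]
      ring
    rw [hsum, key_sum x ρ]
    have hcast2 : ((2 : ℂ) ^ n * (Weyl x * ρ * Weyl x * ρ).trace).re
        = 2 ^ n * ((Weyl x * ρ * Weyl x * ρ).trace).re := by
      have : ((2 : ℂ) ^ n) = (((2 : ℝ) ^ n : ℝ) : ℂ) := by push_cast; ring
      rw [this, Complex.re_ofReal_mul]
    rw [hcast2]
    have hσρ : σ * ρ = Weyl x * ρ * Weyl x * ρ := by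
      rw [hσ, weyl_conjTranspose]
    rw [hσρ]
    have h2n : (0 : ℝ) < 2 ^ n := by positivity
    field_simp
  rw [hmain]
  have hlow : 0 ≤ ((σ * ρ).trace).re := trace_mul_psd_re_nonneg hσpsd hρ
  have hup : ((σ * ρ).trace).re ≤ 1 := by
    have h1 : ((1 - σ) * ρ).trace = 1 - (σ * ρ).trace := by
      rw [Matrix.sub_mul, Matrix.trace_sub, Matrix.one_mul, hτ]
    have h2 : 0 ≤ (((1 - σ) * ρ).trace).re :=
      trace_mul_psd_re_nonneg (one_sub_psd hσpsd hσtr) hρ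
    rw [h1, Complex.sub_re, Complex.one_re] at h2
    linarith
  have h4n : (0 : ℝ) < 4 ^ n := by positivity
  constructor
  · exact div_nonneg hlow (le_of_lt h4n)
  · exact (div_le_div_iff_of_pos_right h4n).mpr hup
end

section
/- Let ρ be an n-qubit mixed state and let |φ⟩ be a stabilizer state with L = Weyl(|φ⟩⟨φ|). Then Σ_{x ∈ L} p_ρ(x) ≥ ⟨φ|ρ|φ⟩². -/
open scoped BigOperators ComplexOrder

/-- A set is Lagrangian if it equals its symplectic complement. -/
def IsLagrangian {n : ℕ} (S : Set (PhaseSpace n)) : Prop :=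
  S = symplComplement S

/-- The outer product `|φ⟩⟨φ|` of a vector `φ ∈ ℂ^{2^n}`. -/
noncomputable def outer {n : ℕ} (φ : (Fin n → ZMod 2) → ℂ) :
    Matrix (Fin n → ZMod 2) (Fin n → ZMod 2) ℂ :=
  Matrix.vecMulVec φ (fun j => starRingEnd ℂ (φ j))

/-- `Weyl(σ) = {x : tr(W_x σ) = ±1}`. -/
def weylSet {n : ℕ} (σ : Matrix (Fin n → ZMod 2) (Fin n → ZMod 2) ℂ) :
    Set (PhaseSpace n) :=
  {x | (Weyl x * σ).trace = 1 ∨ (Weyl x * σ).trace = -1}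

/-- A unit vector `φ` is a stabilizer state iff `Weyl(|φ⟩⟨φ|)` is Lagrangian. -/
def IsStabilizerState {n : ℕ} (φ : (Fin n → ZMod 2) → ℂ) : Prop :=
  (∑ j, Complex.normSq (φ j)) = 1 ∧ IsLagrangian (weylSet (outer φ))

/-- The stabilizer fidelity `F(ρ) = max_{stabilizer |φ⟩} ⟨φ|ρ|φ⟩ = max tr(ρ|φ⟩⟨φ|)`. -/
noncomputable def stabFidelity {n : ℕ}
    (ρ : Matrix (Fin n → ZMod 2) (Fin n → ZMod 2) ℂ) : ℝ :=
  ⨆ φ : {φ : (Fin n → ZMod 2) → ℂ // IsStabilizerState φ}, ((ρ * outer φ.1).trace).re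

set_option maxHeartbeats 1000000

lemma neg_one_pow_nat (m : ℕ) : ((-1 : ℂ))^m = (-1)^((m : ZMod 2)).val := by
  rw [ZMod.val_natCast, neg_one_pow_eq_pow_mod_two]


lemma neg_one_pow_congr' {m k : ℕ} (h : (m : ZMod 2) = (k : ZMod 2)) :
    ((-1 : ℂ))^m = (-1)^k := by rw [neg_one_pow_nat m, neg_one_pow_nat k, h]


lemma neg_one_pow_succ {m k : ℕ} (h : (m : ZMod 2) = (k : ZMod 2) + 1) :
    ((-1 : ℂ))^m = -(-1)^k := by
  rw [neg_one_pow_nat m, neg_one_pow_nat k, h]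
  have : ∀ z : ZMod 2, ((-1:ℂ))^(z+1).val = -(-1)^z.val := by
    intro z; fin_cases z
    · exact (show ((-1:ℂ))^1 = -(-1)^0 by norm_num)
    · exact (show ((-1:ℂ))^0 = -(-1)^1 by norm_num)
  exact this _


lemma cast_sum_val {n : ℕ} (x y : Fin n → ZMod 2) :
    ((∑ i, (x i).val * (y i).val : ℕ) : ZMod 2) = ∑ i, x i * y i := by
  push_cast
  simp [ZMod.natCast_val, ZMod.cast_id]

-- orthogonality

lemma sum_neg_one_pow {n : ℕ} (v : Fin n → ZMod 2) :
    ∑ b : Fin n → ZMod 2, ((-1:ℂ)) ^ (∑ i, (b i).val * (v i).val)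
      = if v = 0 then (2:ℂ)^n else 0 := by
  by_cases hv : v = 0
  · simp [hv]
  · simp only [hv, if_false]
    obtain ⟨i0, hi0⟩ : ∃ i, v i ≠ 0 := by
      by_contra h; push_neg at h; exact hv (funext h)
    have hvi : v i0 = 1 := by
      have : ∀ a : ZMod 2, a ≠ 0 → a = 1 := by decide
      exact this _ hi0
    set S := ∑ b : Fin n → ZMod 2, ((-1:ℂ)) ^ (∑ i, (b i).val * (v i).val) with hS
    have key : S = -S := by
      nth_rewrite 1 [hS]
      rw [← Equiv.sum_comp (Equiv.addRight (Pi.single i0 1 : Fin n → ZMod 2))]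
      rw [← Finset.sum_neg_distrib]
      apply Finset.sum_congr rfl
      intro b _
      simp only [Equiv.coe_addRight]
      apply neg_one_pow_succ
      rw [cast_sum_val, cast_sum_val]
      have h2 : ∑ i, (b + (Pi.single i0 1 : Fin n → ZMod 2)) i * v i
          = ∑ i, b i * v i + ∑ i, (Pi.single i0 1 : Fin n → ZMod 2) i * v i := by
        rw [← Finset.sum_add_distrib]; apply Finset.sum_congr rfl; intro i _
        simp only [Pi.add_apply]; ring
      rw [h2]
      congr 1
      rw [Finset.sum_eq_single i0]
      · simp [hvi]
      · intro i _ hne; simp [Pi.single_eq_of_ne hne]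
      · simp
    have h0 : (2:ℂ) * S = 0 := by linear_combination key
    exact (mul_eq_zero.mp h0).resolve_left two_ne_zero

lemma trace_weyl_mul {n : ℕ} (x : PhaseSpace n)
    (A : Matrix (Fin n → ZMod 2) (Fin n → ZMod 2) ℂ) :
    (Weyl x * A).trace = Complex.I ^ (∑ i, (x.1 i).val * (x.2 i).val) *
      ∑ j, (-1:ℂ) ^ (∑ i, (x.2 i).val * (j i).val) * A j (j + x.1) := by
  rw [Matrix.trace, Finset.mul_sum]
  simp only [Matrix.diag_apply, Matrix.mul_apply, Weyl]
  rw [Finset.sum_comm]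
  apply Finset.sum_congr rfl
  intro j _
  simp only [mul_ite, ite_mul, zero_mul, mul_zero, mul_assoc]
  rw [Finset.sum_ite_eq' Finset.univ (j + x.1)]
  simp


lemma conj_neg_one_pow (m : ℕ) : (starRingEnd ℂ) ((-1:ℂ)^m) = (-1)^m := by
  rw [map_pow, map_neg, map_one]


lemma parseval {n : ℕ} (A C : Matrix (Fin n → ZMod 2) (Fin n → ZMod 2) ℂ) :
    ∑ x : PhaseSpace n, (Weyl x * A).trace * (starRingEnd ℂ) ((Weyl x * C).trace)
      = 2^n * ∑ j, ∑ k, A j k * (starRingEnd ℂ) (C j k) := by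
  have hI : ∀ q : ℕ, Complex.I ^ q * (starRingEnd ℂ) (Complex.I ^ q) = 1 := by
    intro q; rw [Complex.mul_conj]; simp [map_pow, Complex.normSq_I]
  rw [Fintype.sum_prod_type]
  have step1 : ∀ a b : Fin n → ZMod 2,
      (Weyl (a, b) * A).trace * (starRingEnd ℂ) ((Weyl (a, b) * C).trace)
      = ∑ j, ∑ j', ((-1:ℂ) ^ (∑ i, (b i).val * (j i).val) * (-1:ℂ) ^ (∑ i, (b i).val * (j' i).val))
          * (A j (j + a) * (starRingEnd ℂ) (C j' (j' + a))) := by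
    intro a b
    rw [trace_weyl_mul, trace_weyl_mul, map_mul, map_sum, mul_mul_mul_comm, hI, one_mul,
      Finset.sum_mul_sum]
    apply Finset.sum_congr rfl; intro j _
    apply Finset.sum_congr rfl; intro j' _
    rw [map_mul, conj_neg_one_pow]
    ring
  have h1 : (∑ a : Fin n → ZMod 2, ∑ b : Fin n → ZMod 2, (Weyl (a, b) * A).trace * (starRingEnd ℂ) ((Weyl (a, b) * C).trace))
      = ∑ a : Fin n → ZMod 2, ∑ j : Fin n → ZMod 2, ∑ j' : Fin n → ZMod 2,
          (∑ b : Fin n → ZMod 2, (-1:ℂ) ^ (∑ i, (b i).val * (j i).val) * (-1:ℂ) ^ (∑ i, (b i).val * (j' i).val))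
          * (A j (j + a) * (starRingEnd ℂ) (C j' (j' + a))) := by
    apply Finset.sum_congr rfl; intro a _
    rw [show (∑ b : Fin n → ZMod 2, (Weyl (a, b) * A).trace * (starRingEnd ℂ) ((Weyl (a, b) * C).trace))
        = ∑ b : Fin n → ZMod 2, ∑ j, ∑ j', ((-1:ℂ) ^ (∑ i, (b i).val * (j i).val) * (-1:ℂ) ^ (∑ i, (b i).val * (j' i).val))
          * (A j (j + a) * (starRingEnd ℂ) (C j' (j' + a)))
      from Finset.sum_congr rfl fun b _ => step1 a b]
    rw [Finset.sum_comm]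
    apply Finset.sum_congr rfl; intro j _
    rw [Finset.sum_comm]
    apply Finset.sum_congr rfl; intro j' _
    rw [Finset.sum_mul]
  have key : ∀ j j' : Fin n → ZMod 2,
      (∑ b : Fin n → ZMod 2, (-1:ℂ) ^ (∑ i, (b i).val * (j i).val) * (-1:ℂ) ^ (∑ i, (b i).val * (j' i).val))
      = if (j + j' : Fin n → ZMod 2) = 0 then (2:ℂ)^n else 0 := by
    intro j j'
    rw [show (∑ b : Fin n → ZMod 2, (-1:ℂ) ^ (∑ i, (b i).val * (j i).val) * (-1:ℂ) ^ (∑ i, (b i).val * (j' i).val))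
        = ∑ b : Fin n → ZMod 2, (-1:ℂ) ^ (∑ i, (b i).val * ((j + j') i).val)
      from Finset.sum_congr rfl fun b _ => by
        rw [← pow_add]
        apply neg_one_pow_congr'
        rw [cast_sum_val]
        push_cast
        simp only [ZMod.natCast_val, ZMod.cast_id]
        rw [← Finset.sum_add_distrib]
        apply Finset.sum_congr rfl; intro i _
        simp only [Pi.add_apply]; ring]
    exact sum_neg_one_pow _
  have h2 : (∑ a : Fin n → ZMod 2, ∑ j : Fin n → ZMod 2, ∑ j' : Fin n → ZMod 2,
          (∑ b : Fin n → ZMod 2, (-1:ℂ) ^ (∑ i, (b i).val * (j i).val) * (-1:ℂ) ^ (∑ i, (b i).val * (j' i).val))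
          * (A j (j + a) * (starRingEnd ℂ) (C j' (j' + a))))
      = ∑ a : Fin n → ZMod 2, ∑ j : Fin n → ZMod 2,
          (2:ℂ)^n * (A j (j + a) * (starRingEnd ℂ) (C j (j + a))) := by
    apply Finset.sum_congr rfl; intro a _
    apply Finset.sum_congr rfl; intro j _
    rw [Finset.sum_eq_single j]
    · rw [key]
      have hjj : (j + j : Fin n → ZMod 2) = 0 := by
        funext i; exact CharTwo.add_self_eq_zero (j i)
      simp [hjj]
    · intro j' _ hne
      rw [key]
      have hjj : (j + j' : Fin n → ZMod 2) ≠ 0 := by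
        intro h
        apply hne
        funext i
        have hh := congrFun h i
        simp only [Pi.add_apply, Pi.zero_apply] at hh
        have h2 : ∀ u v : ZMod 2, u + v = 0 → v = u := by decide
        exact h2 _ _ hh
      simp [hjj]
    · intro h; exact absurd (Finset.mem_univ j) h
  have h3 : (∑ a : Fin n → ZMod 2, ∑ j : Fin n → ZMod 2,
          (2:ℂ)^n * (A j (j + a) * (starRingEnd ℂ) (C j (j + a))))
      = 2^n * ∑ j, ∑ k, A j k * (starRingEnd ℂ) (C j k) := by
    rw [Finset.sum_comm, Finset.mul_sum]
    apply Finset.sum_congr rfl; intro j _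
    rw [← Finset.mul_sum]
    congr 1
    rw [← Equiv.sum_comp (Equiv.addLeft j : (Fin n → ZMod 2) ≃ _)
      (fun k => A j k * (starRingEnd ℂ) (C j k))]
    rfl
  exact h1.trans (h2.trans h3)


lemma weyl_col_ortho {n : ℕ} (y : PhaseSpace n) (j j' : Fin n → ZMod 2) :
    ∑ k, (starRingEnd ℂ) (Weyl y k j) * Weyl y k j' = if j = j' then 1 else 0 := by
  by_cases h : j = j'
  · subst h
    rw [if_pos rfl]
    have hterm : ∀ k, (starRingEnd ℂ) (Weyl y k j) * Weyl y k j
        = if k = j + y.1 then 1 else 0 := by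
      intro k
      rw [← Complex.normSq_eq_conj_mul_self]
      by_cases hk : k = j + y.1
      · rw [if_pos hk]
        simp [Weyl, hk, Complex.normSq_mul, map_pow, Complex.normSq_I,
          Complex.normSq_neg, Complex.normSq_one]
      · simp [Weyl, if_neg hk]
    rw [Finset.sum_congr rfl (fun k _ => hterm k), Finset.sum_ite_eq' Finset.univ (j + y.1)]
    simp
  · rw [if_neg h]
    apply Finset.sum_eq_zero
    intro k _
    by_cases hk : k = j + y.1
    · have hk' : k ≠ j' + y.1 := by
        intro hh
        exact h (add_right_cancel (hk ▸ hh))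
      have : Weyl y k j' = 0 := by simp [Weyl, if_neg hk']
      rw [this, mul_zero]
    · have : Weyl y k j = 0 := by simp [Weyl, if_neg hk]
      rw [this, map_zero, zero_mul]


lemma weyl_commute {n : ℕ} (x y : PhaseSpace n) :
    Weyl x * Weyl y = ((-1:ℂ) ^ (sympl x y).val) • (Weyl y * Weyl x) := by
  have expand : ∀ u v w : Fin n → ZMod 2,
      (∑ i, u i * (v + w) i) = (∑ i, u i * v i) + ∑ i, u i * w i := by
    intro u v w
    rw [← Finset.sum_add_distrib]
    exact Finset.sum_congr rfl fun i _ => by simp only [Pi.add_apply]; ring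
  have phase : ∀ j : Fin n → ZMod 2,
      (-1:ℂ) ^ (∑ i, (x.2 i).val * ((j + y.1) i).val) * (-1:ℂ) ^ (∑ i, (y.2 i).val * (j i).val)
      = (-1:ℂ) ^ (sympl x y).val *
        ((-1:ℂ) ^ (∑ i, (y.2 i).val * ((j + x.1) i).val) * (-1:ℂ) ^ (∑ i, (x.2 i).val * (j i).val)) := by
    intro j
    rw [← pow_add, ← pow_add, ← pow_add]
    apply neg_one_pow_congr'
    push_cast [cast_sum_val]
    simp only [ZMod.natCast_val, ZMod.cast_id]
    rw [expand x.2 j y.1, expand y.2 j x.1]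
    unfold sympl
    have hST : (∑ i, y.2 i * x.1 i) = ∑ i, x.1 i * y.2 i :=
      Finset.sum_congr rfl fun i _ => mul_comm _ _
    have h2T : (∑ i, x.1 i * y.2 i) + (∑ i, x.1 i * y.2 i) = 0 :=
      CharTwo.add_self_eq_zero _
    linear_combination (-1 : ZMod 2) * h2T - hST
  ext k j
  rw [Matrix.smul_apply, Matrix.mul_apply, Matrix.mul_apply]
  have hL : (∑ m, Weyl x k m * Weyl y m j) = Weyl x k (j + y.1) * Weyl y (j + y.1) j := by
    apply Finset.sum_eq_single
    · intro m _ hm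
      have : Weyl y m j = 0 := by simp [Weyl, if_neg hm]
      rw [this, mul_zero]
    · intro h; exact absurd (Finset.mem_univ _) h
  have hR : (∑ m, Weyl y k m * Weyl x m j) = Weyl y k (j + x.1) * Weyl x (j + x.1) j := by
    apply Finset.sum_eq_single
    · intro m _ hm
      have : Weyl x m j = 0 := by simp [Weyl, if_neg hm]
      rw [this, mul_zero]
    · intro h; exact absurd (Finset.mem_univ _) h
  rw [hL, hR]
  simp only [Weyl]
  have hcond : j + y.1 + x.1 = j + x.1 + y.1 := add_right_comm j y.1 x.1
  rw [hcond]
  by_cases hk : k = j + x.1 + y.1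
  · simp only [if_pos hk, if_true, eq_self_iff_true, smul_eq_mul]
    linear_combination (Complex.I ^ (∑ i, (x.1 i).val * (x.2 i).val) *
      Complex.I ^ (∑ i, (y.1 i).val * (y.2 i).val)) * phase j
  · simp only [if_neg hk, mul_zero, zero_mul, smul_zero]


lemma trace_weyl_outer {n : ℕ} (y : PhaseSpace n) (φ : (Fin n → ZMod 2) → ℂ) :
    (Weyl y * outer φ).trace = ∑ k, (starRingEnd ℂ) (φ k) * ((Weyl y).mulVec φ) k := by
  rw [Matrix.trace]
  simp only [Matrix.diag_apply, Matrix.mul_apply, outer, Matrix.vecMulVec_apply,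
    Matrix.mulVec, dotProduct]
  apply Finset.sum_congr rfl; intro k _
  rw [Finset.mul_sum]
  apply Finset.sum_congr rfl; intro j _
  ring


lemma eig_of_weylSet {n : ℕ} (φ : (Fin n → ZMod 2) → ℂ)
    (hnorm : (∑ j, Complex.normSq (φ j)) = 1) (y : PhaseSpace n) (ε : ℂ)
    (hε : ε = 1 ∨ ε = -1) (htr : (Weyl y * outer φ).trace = ε) :
    (Weyl y).mulVec φ = ε • φ := by
  set ψ := (Weyl y).mulVec φ with hψdef
  have hconjε : (starRingEnd ℂ) ε = ε := by rcases hε with h | h <;> simp [h]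
  have hε2 : ε * ε = 1 := by rcases hε with h | h <;> simp [h]
  have hφn : (∑ k, (starRingEnd ℂ) (φ k) * φ k) = 1 := by
    have : ∀ k, (starRingEnd ℂ) (φ k) * φ k = ((Complex.normSq (φ k) : ℝ) : ℂ) := by
      intro k; rw [Complex.normSq_eq_conj_mul_self]
    rw [Finset.sum_congr rfl fun k _ => this k]
    push_cast
    exact_mod_cast congrArg (fun r : ℝ => (r : ℂ)) hnorm
  have hT : (∑ k, (starRingEnd ℂ) (φ k) * ψ k) = ε := by
    rw [← trace_weyl_outer]; exact htr
  have hT' : (∑ k, (starRingEnd ℂ) (ψ k) * φ k) = ε := by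
    have := congrArg (starRingEnd ℂ) hT
    rw [map_sum, hconjε] at this
    rw [← this]
    apply Finset.sum_congr rfl; intro k _
    simp [mul_comm]
  have hψn : (∑ k, (starRingEnd ℂ) (ψ k) * ψ k) = 1 := by
    have expand : ∀ k, (starRingEnd ℂ) (ψ k) * ψ k
        = ∑ j, ∑ j', ((starRingEnd ℂ) (Weyl y k j) * Weyl y k j') *
            ((starRingEnd ℂ) (φ j) * φ j') := by
      intro k
      rw [hψdef]
      simp only [Matrix.mulVec, dotProduct, map_sum, map_mul, Finset.sum_mul_sum]
      apply Finset.sum_congr rfl; intro j _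
      apply Finset.sum_congr rfl; intro j' _
      ring
    rw [Finset.sum_congr rfl fun k _ => expand k]
    rw [Finset.sum_comm]
    have inner : ∀ j : Fin n → ZMod 2, (∑ k, ∑ j', ((starRingEnd ℂ) (Weyl y k j) * Weyl y k j') *
        ((starRingEnd ℂ) (φ j) * φ j')) = (starRingEnd ℂ) (φ j) * φ j := by
      intro j
      rw [Finset.sum_comm]
      rw [show (∑ j' : Fin n → ZMod 2, ∑ k, ((starRingEnd ℂ) (Weyl y k j) * Weyl y k j') *
          ((starRingEnd ℂ) (φ j) * φ j'))
        = ∑ j' : Fin n → ZMod 2, (if j = j' then (1:ℂ) else 0) * ((starRingEnd ℂ) (φ j) * φ j')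
        from Finset.sum_congr rfl fun j' _ => by
          rw [← Finset.sum_mul, weyl_col_ortho]]
      simp only [ite_mul, one_mul, zero_mul, Finset.sum_ite_eq, Finset.mem_univ, if_true]
    rw [Finset.sum_congr rfl fun j _ => inner j, hφn]
  have hzero : (∑ k, (starRingEnd ℂ) (ψ k - ε * φ k) * (ψ k - ε * φ k)) = 0 := by
    have expand : (∑ k, (starRingEnd ℂ) (ψ k - ε * φ k) * (ψ k - ε * φ k))
        = (∑ k, (starRingEnd ℂ) (ψ k) * ψ k) - ε * (∑ k, (starRingEnd ℂ) (ψ k) * φ k)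
          - (starRingEnd ℂ) ε * (∑ k, (starRingEnd ℂ) (φ k) * ψ k)
          + ((starRingEnd ℂ) ε * ε) * (∑ k, (starRingEnd ℂ) (φ k) * φ k) := by
      rw [Finset.mul_sum, Finset.mul_sum, Finset.mul_sum, ← Finset.sum_sub_distrib,
        ← Finset.sum_sub_distrib, ← Finset.sum_add_distrib]
      apply Finset.sum_congr rfl; intro k _
      simp only [map_sub, map_mul]
      ring
    rw [expand, hψn, hT, hT', hφn, hconjε]
    linear_combination -hε2
  have hreal : (∑ k, Complex.normSq (ψ k - ε * φ k)) = 0 := by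
    have : ((∑ k, Complex.normSq (ψ k - ε * φ k) : ℝ) : ℂ) = 0 := by
      push_cast
      rw [← hzero]
      apply Finset.sum_congr rfl; intro k _
      rw [← Complex.normSq_eq_conj_mul_self]
    exact_mod_cast this
  funext k
  have hk : Complex.normSq (ψ k - ε * φ k) = 0 := by
    have := (Finset.sum_eq_zero_iff_of_nonneg
      (fun k _ => Complex.normSq_nonneg (ψ k - ε * φ k))).mp hreal k (Finset.mem_univ k)
    exact this
  have := Complex.normSq_eq_zero.mp hk
  have := sub_eq_zero.mp this
  simpa [Pi.smul_apply, smul_eq_mul] using this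


lemma weyl_conj_outer {n : ℕ} (φ : (Fin n → ZMod 2) → ℂ)
    (hnorm : (∑ j, Complex.normSq (φ j)) = 1) (y : PhaseSpace n) (ε : ℂ)
    (hε : ε = 1 ∨ ε = -1) (htr : (Weyl y * outer φ).trace = ε) :
    Weyl y * outer φ = ε • outer φ ∧ outer φ * Weyl y = ε • outer φ := by
  have hψ : (Weyl y).mulVec φ = ε • φ := eig_of_weylSet φ hnorm y ε hε htr
  have hε2 : ε * ε = 1 := by rcases hε with h | h <;> simp [h]
  have hconjε : (starRingEnd ℂ) ε = ε := by rcases hε with h | h <;> simp [h]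
  constructor
  · ext k l
    rw [Matrix.smul_apply, Matrix.mul_apply]
    simp only [outer, Matrix.vecMulVec_apply]
    have : (∑ j, Weyl y k j * (φ j * (starRingEnd ℂ) (φ l)))
        = (∑ j, Weyl y k j * φ j) * (starRingEnd ℂ) (φ l) := by
      rw [Finset.sum_mul]
      exact Finset.sum_congr rfl fun j _ => by ring
    rw [this]
    have hψk : (∑ j, Weyl y k j * φ j) = ε * φ k := by
      have := congrFun hψ k
      simpa [Matrix.mulVec, dotProduct, Pi.smul_apply, smul_eq_mul] using this
    rw [hψk]
    simp [smul_eq_mul]; ring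
  · have claim : ∀ l, (∑ j, (starRingEnd ℂ) (Weyl y j l) * φ j) = ε * φ l := by
      intro l
      have h1 : (∑ j, (starRingEnd ℂ) (Weyl y j l) * ((Weyl y).mulVec φ) j) = φ l := by
        have expand : ∀ j, (starRingEnd ℂ) (Weyl y j l) * ((Weyl y).mulVec φ) j
            = ∑ m, ((starRingEnd ℂ) (Weyl y j l) * Weyl y j m) * φ m := by
          intro j
          simp only [Matrix.mulVec, dotProduct, Finset.mul_sum]
          exact Finset.sum_congr rfl fun m _ => by ring
        rw [Finset.sum_congr rfl fun j _ => expand j, Finset.sum_comm]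
        rw [show (∑ m : Fin n → ZMod 2, ∑ j, ((starRingEnd ℂ) (Weyl y j l) * Weyl y j m) * φ m)
            = ∑ m : Fin n → ZMod 2, (if l = m then (1:ℂ) else 0) * φ m
          from Finset.sum_congr rfl fun m _ => by rw [← Finset.sum_mul, weyl_col_ortho]]
        simp only [ite_mul, one_mul, zero_mul, Finset.sum_ite_eq, Finset.mem_univ, if_true]
      rw [hψ] at h1
      have h2 : ε * (∑ j, (starRingEnd ℂ) (Weyl y j l) * φ j) = φ l := by
        rw [← h1, Finset.mul_sum]
        exact Finset.sum_congr rfl fun j _ => by simp [smul_eq_mul]; ring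
      calc (∑ j, (starRingEnd ℂ) (Weyl y j l) * φ j)
          = ε * (ε * (∑ j, (starRingEnd ℂ) (Weyl y j l) * φ j)) := by
            rw [← mul_assoc, hε2, one_mul]
        _ = ε * φ l := by rw [h2]
    ext k l
    rw [Matrix.smul_apply, Matrix.mul_apply]
    simp only [outer, Matrix.vecMulVec_apply]
    have : (∑ j, φ k * (starRingEnd ℂ) (φ j) * Weyl y j l)
        = φ k * (starRingEnd ℂ) (∑ j, (starRingEnd ℂ) (Weyl y j l) * φ j) := by
      rw [map_sum, Finset.mul_sum]
      exact Finset.sum_congr rfl fun j _ => by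
        rw [map_mul, Complex.conj_conj]; ring
    rw [this, claim, map_mul, hconjε]
    simp [smul_eq_mul]; ring


lemma trace_vanish {n : ℕ} (φ : (Fin n → ZMod 2) → ℂ) (hφ : IsStabilizerState φ)
    (x : PhaseSpace n) (hx : x ∉ weylSet (outer φ)) :
    (Weyl x * outer φ).trace = 0 := by
  obtain ⟨y, hyL, hxy⟩ : ∃ y ∈ weylSet (outer φ), sympl x y ≠ 0 := by
    by_contra h
    push_neg at h
    exact hx (hφ.2 ▸ h)
  have hxy1 : (sympl x y).val = 1 := by
    have : ∀ a : ZMod 2, a ≠ 0 → a.val = 1 := by decide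
    exact this _ hxy
  set ε := (Weyl y * outer φ).trace with hεdef
  have hε : ε = 1 ∨ ε = -1 := hyL
  have hεne : ε ≠ 0 := by rcases hε with h | h <;> simp [h]
  obtain ⟨hWσ, hσW⟩ := weyl_conj_outer φ hφ.1 y ε hε rfl
  set σ := outer φ
  have hA : (Weyl x * (Weyl y * σ)).trace = ε * (Weyl x * σ).trace := by
    rw [hWσ, Matrix.mul_smul, Matrix.trace_smul, smul_eq_mul]
  have hB : (Weyl x * (σ * Weyl y)).trace = ε * (Weyl x * σ).trace := by
    rw [hσW, Matrix.mul_smul, Matrix.trace_smul, smul_eq_mul]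
  have hC : (Weyl x * (σ * Weyl y)).trace = ((Weyl y * Weyl x) * σ).trace := by
    rw [← Matrix.mul_assoc, Matrix.trace_mul_comm, Matrix.mul_assoc]
  have hD : ((Weyl x * Weyl y) * σ).trace = - ((Weyl y * Weyl x) * σ).trace := by
    rw [weyl_commute x y, hxy1, pow_one, Matrix.smul_mul, Matrix.trace_smul]
    simp
  have : ε * (Weyl x * σ).trace = - (ε * (Weyl x * σ).trace) := by
    calc ε * (Weyl x * σ).trace = (Weyl x * (Weyl y * σ)).trace := hA.symm
      _ = ((Weyl x * Weyl y) * σ).trace := by rw [Matrix.mul_assoc]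
      _ = - ((Weyl y * Weyl x) * σ).trace := hD
      _ = - (Weyl x * (σ * Weyl y)).trace := by rw [hC]
      _ = - (ε * (Weyl x * σ).trace) := by rw [hB]
  have h0 : (2:ℂ) * (ε * (Weyl x * σ).trace) = 0 := by linear_combination this
  rcases mul_eq_zero.mp h0 with h | h
  · exact absurd h two_ne_zero
  · rcases mul_eq_zero.mp h with h' | h'
    · exact absurd h' hεne
    · exact h'


/-- Let ρ be an n-qubit mixed state and |φ⟩ a stabilizer state with
L = Weyl(|φ⟩⟨φ|). Then ∑_{x ∈ L} p_ρ(x) ≥ ⟨φ|ρ|φ⟩². -/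
theorem sum_pFun_on_weylSet_ge {n : ℕ}
    (ρ : Matrix (Fin n → ZMod 2) (Fin n → ZMod 2) ℂ)
    (hρ : ρ.PosSemidef) (hτ : ρ.trace = 1)
    (φ : (Fin n → ZMod 2) → ℂ) (hφ : IsStabilizerState φ)
    (L : Set (PhaseSpace n)) (hL : L = weylSet (outer φ)) :
    ∑ x, L.indicator (pFun ρ) x ≥ (((ρ * outer φ).trace).re) ^ 2 := by
  obtain ⟨hnorm, hlag⟩ := hφ
  set σ := outer φ with hσdef
  set s : PhaseSpace n → ℝ := fun x => ((Weyl x * σ).trace).re with hsdef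
  set r : PhaseSpace n → ℝ := fun x => ((Weyl x * ρ).trace).re with hrdef
  have h2n : (0:ℝ) < 2 ^ n := by positivity
  have K1 : ∀ x, (Weyl x * σ).trace = ((s x : ℝ) : ℂ) := by
    intro x
    by_cases hx : x ∈ weylSet σ
    · rcases hx with h | h <;> simp [hsdef, h]
    · rw [trace_vanish φ ⟨hnorm, hlag⟩ x hx]
      have : s x = 0 := by simp [hsdef, hσdef, trace_vanish φ ⟨hnorm, hlag⟩ x hx]
      rw [this]; simp
  have hs_vals : ∀ x, s x = 1 ∨ s x = -1 ∨ s x = 0 := by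
    intro x
    by_cases hx : x ∈ weylSet σ
    · rcases hx with h | h
      · left; simp [hsdef, h]
      · right; left; simp [hsdef, h]
    · right; right
      simp [hsdef, hσdef, trace_vanish φ ⟨hnorm, hlag⟩ x hx]
  have hs0 : ∀ x, x ∉ L → s x = 0 := by
    intro x hx
    rw [hL] at hx
    simp [hsdef, hσdef, trace_vanish φ ⟨hnorm, hlag⟩ x hx]
  have hs1 : ∀ x, x ∈ L → s x ^ 2 = 1 := by
    intro x hx
    rw [hL] at hx
    rcases hx with h | h <;> simp [hsdef, h] <;> norm_num
  -- K2 : ∑ s² = 2^n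
  have K2 : (∑ x, s x ^ 2) = 2 ^ n := by
    have hp := parseval σ σ
    have hLHS : (∑ x : PhaseSpace n, (Weyl x * σ).trace * (starRingEnd ℂ) ((Weyl x * σ).trace))
        = ((∑ x, s x ^ 2 : ℝ) : ℂ) := by
      push_cast
      apply Finset.sum_congr rfl; intro x _
      rw [K1 x]
      simp [← Complex.ofReal_pow]
      push_cast
      ring
    have hRHS : (∑ j, ∑ k, σ j k * (starRingEnd ℂ) (σ j k)) = 1 := by
      have h1 : ∀ j k, σ j k * (starRingEnd ℂ) (σ j k)
          = ((Complex.normSq (φ j) * Complex.normSq (φ k) : ℝ) : ℂ) := by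
        intro j k
        rw [Complex.mul_conj]
        congr 1
        simp [hσdef, outer, Matrix.vecMulVec_apply, Complex.normSq_mul, Complex.normSq_conj]
      rw [Finset.sum_congr rfl fun j _ => Finset.sum_congr rfl fun k _ => h1 j k]
      push_cast
      rw [← Finset.sum_mul_sum]
      rw_mod_cast [hnorm]
      norm_num
    rw [hLHS, hRHS, mul_one] at hp
    exact_mod_cast hp
  -- K3 : ∑ r * s = 2^n * T
  set T : ℝ := ((ρ * σ).trace).re with hTdef
  have K3 : (∑ x, r x * s x) = 2 ^ n * T := by
    have hp := parseval ρ σ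
    have hRHS : (∑ j, ∑ k, ρ j k * (starRingEnd ℂ) (σ j k)) = (ρ * σ).trace := by
      have hconjσ : ∀ j k, (starRingEnd ℂ) (σ j k) = σ k j := by
        intro j k
        simp [hσdef, outer, Matrix.vecMulVec_apply, map_mul, Complex.conj_conj, mul_comm]
      rw [Finset.sum_congr rfl fun j _ => Finset.sum_congr rfl fun k _ => by rw [hconjσ j k]]
      rw [Matrix.trace]
      simp only [Matrix.diag_apply, Matrix.mul_apply]
    rw [hRHS] at hp
    have := congrArg Complex.re hp
    rw [Complex.re_sum] at this
    have hterm : ∀ x : PhaseSpace n,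
        ((Weyl x * ρ).trace * (starRingEnd ℂ) ((Weyl x * σ).trace)).re = r x * s x := by
      intro x
      rw [K1 x, Complex.conj_ofReal, Complex.mul_re]
      simp [hrdef]
    rw [Finset.sum_congr rfl fun x _ => hterm x] at this
    rw [this]
    have : ((2:ℂ)^n * (ρ * σ).trace).re = 2^n * T := by
      rw [show ((2:ℂ))^n = (((2:ℝ)^n : ℝ) : ℂ) by push_cast; ring]
      rw [Complex.re_ofReal_mul]
    rw [this]
  -- indicator rewrite
  have hind : ∀ x, L.indicator (pFun ρ) x = r x ^ 2 * s x ^ 2 / 2 ^ n := by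
    intro x
    by_cases hx : x ∈ L
    · rw [Set.indicator_of_mem hx, hs1 x hx, pFun]
      simp [hrdef, mul_one]
    · rw [Set.indicator_of_notMem hx, hs0 x hx]
      ring
  -- Cauchy-Schwarz
  have hs3 : ∀ x, (r x * s x) * (s x * s x) = r x * s x := by
    intro x
    rcases hs_vals x with h | h | h <;> rw [h] <;> ring
  have hs4 : ∀ x, (s x * s x) ^ 2 = s x ^ 2 := by
    intro x
    rcases hs_vals x with h | h | h <;> rw [h] <;> ring
  have CS := Finset.sum_mul_sq_le_sq_mul_sq Finset.univ (fun x => r x * s x)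
    (fun x => s x * s x)
  simp only [hs3] at CS
  rw [Finset.sum_congr rfl fun x _ => hs4 x, K2, K3] at CS
  -- finish
  rw [Finset.sum_congr rfl fun x _ => hind x, ← Finset.sum_div]
  rw [ge_iff_le, le_div_iff₀ h2n]
  have key : T ^ 2 * 2 ^ n * 2 ^ n ≤ (∑ x, r x ^ 2 * s x ^ 2) * 2 ^ n := by
    calc T ^ 2 * 2 ^ n * 2 ^ n = (2 ^ n * T) ^ 2 := by ring
      _ ≤ (∑ x, (r x * s x) ^ 2) * 2 ^ n := CS
      _ = (∑ x, r x ^ 2 * s x ^ 2) * 2 ^ n := by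
          congr 1
          exact Finset.sum_congr rfl fun x _ => by ring
  exact le_of_mul_le_mul_right key h2n
end

section
/- Let f : 𝔽₂^{2n} → ℝ satisfy 0 ≤ f(x) ≤ 2^{-n} for all x and Σ_{x ∈ 𝔽₂^{2n}} f(x) ≤ 1, and suppose 2^n · Σ_{x,y ∈ 𝔽₂^{2n}} f(x) f(y) f(x+y) ≥ γ. Then the set M := {x ∈ 𝔽₂^{2n} : 2^n f(x) ≥ γ/4} has cardinality |M| ≥ (3/4) · γ · 2^n. -/
open scoped BigOperators ComplexOrder

/-- If 0 ≤ f ≤ 2^{-n}, ∑ f ≤ 1 and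
2^n ∑_{x,y} f(x)f(y)f(x+y) ≥ γ, then
M := {x : 2^n f(x) ≥ γ/4} satisfies |M| ≥ (3/4) γ 2^n. -/
theorem card_large_values_ge {n : ℕ} (hn : 0 < n) (γ : ℝ) (hγ : 0 < γ)
    (f : PhaseSpace n → ℝ)
    (hf0 : ∀ x, 0 ≤ f x) (hf1 : ∀ x, f x ≤ 1 / 2 ^ n)
    (hsum : ∑ x, f x ≤ 1)
    (hγle : γ ≤ 2 ^ n * ∑ x, ∑ y, f x * f y * f (x + y)) :
    (3 / 4 : ℝ) * γ * 2 ^ n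
      ≤ (Nat.card {x : PhaseSpace n | γ / 4 ≤ 2 ^ n * f x} : ℝ) := by
  classical
  have hP : (0:ℝ) < 2 ^ n := by positivity
  have hxx : ∀ x : PhaseSpace n, x + x = 0 := by
    intro x; ext i <;> exact CharTwo.add_self_eq_zero _
  set M : Finset (PhaseSpace n) :=
    Finset.univ.filter (fun x => γ / 4 ≤ 2 ^ n * f x) with hMdef
  have hcard : (Nat.card {x : PhaseSpace n | γ / 4 ≤ 2 ^ n * f x}) = M.card := by
    rw [Nat.card_eq_fintype_card, Fintype.card_subtype]
    simp [hMdef, Set.mem_setOf_eq]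
  set S : PhaseSpace n → ℝ := fun z => ∑ x, f x * f (x + z) with hSdef
  have hS0 : ∀ z, 0 ≤ S z := fun z =>
    Finset.sum_nonneg fun x _ => mul_nonneg (hf0 x) (hf0 _)
  have hsum0 : (0:ℝ) ≤ ∑ x, f x := Finset.sum_nonneg fun x _ => hf0 x
  -- sum of f over translates
  have htrans : ∀ z : PhaseSpace n, ∑ x, f (x + z) = ∑ x, f x := by
    intro z
    exact Fintype.sum_equiv (Equiv.addRight z) _ _ (fun x => rfl)
  have hSle : ∀ z, S z ≤ 1 / 2 ^ n := by
    intro z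
    calc S z ≤ ∑ x, (1 / 2 ^ n) * f (x + z) :=
          Finset.sum_le_sum fun x _ =>
            mul_le_mul_of_nonneg_right (hf1 x) (hf0 _)
      _ = (1 / 2 ^ n) * ∑ x, f (x + z) := by rw [Finset.mul_sum]
      _ = (1 / 2 ^ n) * ∑ x, f x := by rw [htrans]
      _ ≤ (1 / 2 ^ n) * 1 := by
          exact mul_le_mul_of_nonneg_left hsum (by positivity)
      _ = 1 / 2 ^ n := mul_one _
  have hSsum : ∑ z, S z ≤ 1 := by
    have h1 : ∑ z, S z = ∑ x, f x * ∑ z, f (x + z) := by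
      rw [Finset.sum_comm]
      exact Finset.sum_congr rfl fun x _ => (Finset.mul_sum _ _ _).symm
    have htransL : ∀ x : PhaseSpace n, ∑ z, f (x + z) = ∑ z, f z := by
      intro x
      exact Fintype.sum_equiv (Equiv.addLeft x) _ _ (fun z => rfl)
    calc ∑ z, S z = ∑ x, f x * ∑ z, f z := by
          rw [h1]; exact Finset.sum_congr rfl fun x _ => by rw [htransL]
      _ = (∑ x, f x) * ∑ z, f z := by rw [← Finset.sum_mul]
      _ ≤ 1 * 1 := mul_le_mul hsum hsum hsum0 zero_le_one
      _ = 1 := one_mul 1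
  -- rewrite the triple sum
  have hT : (∑ x, ∑ y, f x * f y * f (x + y)) = ∑ z, f z * S z := by
    have hx : ∀ x : PhaseSpace n,
        ∑ y, f x * f y * f (x + y) = ∑ z, f x * f (x + z) * f z := by
      intro x
      refine Fintype.sum_equiv (Equiv.addLeft x) _ _ (fun z => ?_)
      have : x + (x + z) = z := by rw [← add_assoc, hxx, zero_add]
      simp only [Equiv.coe_addLeft, this]
    calc (∑ x, ∑ y, f x * f y * f (x + y))
        = ∑ x, ∑ z, f x * f (x + z) * f z := Finset.sum_congr rfl fun x _ => hx x
      _ = ∑ z, ∑ x, f x * f (x + z) * f z := Finset.sum_comm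
      _ = ∑ z, f z * S z := by
          refine Finset.sum_congr rfl fun z _ => ?_
          rw [hSdef]
          simp only [Finset.mul_sum, Finset.sum_mul]
          exact Finset.sum_congr rfl fun x _ => by ring
  -- split into M and Mᶜ
  have hsplit : ∑ z, f z * S z =
      (∑ z ∈ M, f z * S z) + ∑ z ∈ Finset.univ.filter
        (fun x => ¬ (γ / 4 ≤ 2 ^ n * f x)), f z * S z := by
    rw [hMdef]
    exact (Finset.sum_filter_add_sum_filter_not _ _ _).symm
  have hA : (∑ z ∈ M, f z * S z) ≤ (M.card : ℝ) * (1 / 2 ^ n * (1 / 2 ^ n)) := by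
    have := Finset.sum_le_card_nsmul M (fun z => f z * S z)
      (1 / 2 ^ n * (1 / 2 ^ n)) (fun z _ =>
        mul_le_mul (hf1 z) (hSle z) (hS0 z) (by positivity))
    simpa [nsmul_eq_mul] using this
  have hB : (∑ z ∈ Finset.univ.filter (fun x => ¬ (γ / 4 ≤ 2 ^ n * f x)),
      f z * S z) ≤ γ / (4 * 2 ^ n) := by
    have step1 : (∑ z ∈ Finset.univ.filter (fun x => ¬ (γ / 4 ≤ 2 ^ n * f x)),
        f z * S z) ≤ ∑ z ∈ Finset.univ.filter (fun x => ¬ (γ / 4 ≤ 2 ^ n * f x)),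
        (γ / (4 * 2 ^ n)) * S z := by
      refine Finset.sum_le_sum fun z hz => ?_
      have hz' : 2 ^ n * f z < γ / 4 := by
        simpa using not_le.mp (Finset.mem_filter.mp hz).2
      have hfz : f z ≤ γ / (4 * 2 ^ n) := by
        rw [div_mul_eq_div_div]
        rw [le_div_iff₀ hP]
        nlinarith
      exact mul_le_mul_of_nonneg_right hfz (hS0 z)
    have step2 : (∑ z ∈ Finset.univ.filter (fun x => ¬ (γ / 4 ≤ 2 ^ n * f x)),
        (γ / (4 * 2 ^ n)) * S z) ≤ (γ / (4 * 2 ^ n)) * ∑ z, S z := by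
      rw [← Finset.mul_sum]
      refine mul_le_mul_of_nonneg_left ?_ (by positivity)
      exact Finset.sum_le_sum_of_subset_of_nonneg (Finset.filter_subset _ _)
        (fun z _ _ => hS0 z)
    calc _ ≤ _ := step1
      _ ≤ (γ / (4 * 2 ^ n)) * ∑ z, S z := step2
      _ ≤ (γ / (4 * 2 ^ n)) * 1 := mul_le_mul_of_nonneg_left hSsum (by positivity)
      _ = γ / (4 * 2 ^ n) := mul_one _
  rw [hcard]
  have key : γ ≤ 2 ^ n * ((M.card : ℝ) * (1 / 2 ^ n * (1 / 2 ^ n)) + γ / (4 * 2 ^ n)) := by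
    calc γ ≤ 2 ^ n * ∑ x, ∑ y, f x * f y * f (x + y) := hγle
      _ = 2 ^ n * ((∑ z ∈ M, f z * S z) + ∑ z ∈ Finset.univ.filter
          (fun x => ¬ (γ / 4 ≤ 2 ^ n * f x)), f z * S z) := by rw [hT, hsplit]
      _ ≤ _ := by
          apply mul_le_mul_of_nonneg_left _ (le_of_lt hP)
          exact add_le_add hA hB
  have h2 : (2:ℝ) ^ n * ((M.card : ℝ) * (1 / 2 ^ n * (1 / 2 ^ n)) + γ / (4 * 2 ^ n))
      = (M.card : ℝ) / 2 ^ n + γ / 4 := by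
    field_simp
  rw [h2] at key
  rw [div_add_div _ _ (ne_of_gt hP) (by norm_num : (4:ℝ) ≠ 0)] at key
  have := (le_div_iff₀ (by positivity : (0:ℝ) < 2 ^ n * 4)).mp key
  nlinarith
end

section
/- There exists a universal constant c > 0 such that the following holds. Let f : 𝔽₂^{2n} → ℝ satisfy 0 ≤ f(x) ≤ 2^{-n} for all x and Σ_{x ∈ 𝔽₂^{2n}} f(x) ≤ 1, and suppose 2^n · Σ_{x,y ∈ 𝔽₂^{2n}} f(x) f(y) f(x+y) ≥ γ for some γ > 0. Then there exists a subset S ⊆ 𝔽₂^{2n} with (γ²/80) · 2^n ≤ |S| ≤ (4/γ) · 2^n such that: (i) for all x ∈ S, 2^n f(x) ≥ γ/4; and (ii) Pr_{x,y uniform in S}[x + y ∈ S] ≥ c · γ^5. -/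
open scoped BigOperators ComplexOrder

set_option maxHeartbeats 1000000 in
/-- There is a universal constant c > 0 such that: if 0 ≤ f ≤ 2^{-n},
∑ f ≤ 1 and 2^n ∑_{x,y} f(x)f(y)f(x+y) ≥ γ > 0, then there is a subset
S ⊆ 𝔽₂^{2n} with (γ²/80)·2^n ≤ |S| ≤ (4/γ)·2^n, such that 2^n f(x) ≥ γ/4 on S
and Pr_{x,y ∈ S}[x + y ∈ S] ≥ c γ⁵. -/
theorem exists_approximate_subgroup :
    ∃ c : ℝ, 0 < c ∧
      ∀ (n : ℕ), 0 < n → ∀ (f : PhaseSpace n → ℝ) (γ : ℝ), 0 < γ →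
        (∀ x, 0 ≤ f x) → (∀ x, f x ≤ 1 / 2 ^ n) → (∑ x, f x ≤ 1) →
        γ ≤ 2 ^ n * ∑ x, ∑ y, f x * f y * f (x + y) →
        ∃ S : Set (PhaseSpace n),
          (γ ^ 2 / 80) * 2 ^ n ≤ (Nat.card S : ℝ) ∧
          (Nat.card S : ℝ) ≤ (4 / γ) * 2 ^ n ∧
          (∀ x ∈ S, γ / 4 ≤ 2 ^ n * f x) ∧
          c * γ ^ 5 ≤
            (Nat.card {p : PhaseSpace n × PhaseSpace n //
                p.1 ∈ S ∧ p.2 ∈ S ∧ p.1 + p.2 ∈ S} : ℝ) / (Nat.card S : ℝ) ^ 2 := by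
  classical
  refine ⟨1/64, by norm_num, ?_⟩
  intro n _hn f γ hγ hf0 hf1 hfsum hT
  set N : ℝ := 2 ^ n with hNdef
  have hN : (0:ℝ) < N := by positivity
  have hfs0 : 0 ≤ ∑ x, f x := Finset.sum_nonneg fun x _ => hf0 x
  have hf1' : ∀ x, f x ≤ 1 / N := hf1
  -- shift invariance of sums
  have hshiftR : ∀ y : PhaseSpace n, ∑ x, f (x + y) = ∑ x, f x := fun y =>
    Fintype.sum_equiv (Equiv.addRight y) _ _ (fun _ => rfl)
  have hshiftL : ∀ x : PhaseSpace n, ∑ y, f (x + y) = ∑ y, f y := fun x =>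
    Fintype.sum_equiv (Equiv.addLeft x) _ _ (fun _ => rfl)
  -- the level set
  set F : Finset (PhaseSpace n) := Finset.univ.filter (fun x => γ / 4 ≤ N * f x) with hFdef
  have hmemF : ∀ x, x ∈ F ↔ γ / 4 ≤ N * f x := by intro x; simp [hFdef]
  set B : ℝ := γ / (4 * N) with hBdef
  have hB : 0 ≤ B := by positivity
  have hNB : N * B = γ / 4 := by rw [hBdef]; field_simp
  have hnotF : ∀ x, x ∉ F → f x ≤ B := by
    intro x hx
    rw [hmemF] at hx
    push_neg at hx
    rw [hBdef, le_div_iff₀ (by positivity : (0:ℝ) < 4 * N)]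
    nlinarith
  -- the good pair set
  set G : Finset (PhaseSpace n × PhaseSpace n) :=
    Finset.univ.filter (fun p => p.1 ∈ F ∧ p.2 ∈ F ∧ p.1 + p.2 ∈ F) with hGdef
  set GS : ℝ := ∑ p ∈ G, f p.1 * f p.2 * f (p.1 + p.2) with hGSdef
  -- bounds on auxiliary double sums
  have hd1 : ∑ x, ∑ y, f y * f (x + y) ≤ 1 := by
    rw [Finset.sum_comm]
    calc ∑ y, ∑ x, f y * f (x + y) = ∑ y, f y * ∑ x, f (x + y) := by
          simp [Finset.mul_sum]
      _ = ∑ y, f y * ∑ x, f x := by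
          refine Finset.sum_congr rfl fun y _ => by rw [hshiftR y]
      _ = (∑ y, f y) * (∑ x, f x) := by rw [← Finset.sum_mul]
      _ ≤ 1 := by nlinarith
  have hd2 : ∑ x, ∑ y, f x * f (x + y) ≤ 1 := by
    calc ∑ x, ∑ y, f x * f (x + y) = ∑ x, f x * ∑ y, f (x + y) := by
          simp [Finset.mul_sum]
      _ = ∑ x, f x * ∑ y, f y := by
          refine Finset.sum_congr rfl fun x _ => by rw [hshiftL x]
      _ = (∑ x, f x) * (∑ y, f y) := by rw [← Finset.sum_mul]
      _ ≤ 1 := by nlinarith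
  have hd3 : ∑ x : PhaseSpace n, ∑ y : PhaseSpace n, f x * f y ≤ 1 := by
    calc ∑ x : PhaseSpace n, ∑ y : PhaseSpace n, f x * f y
        = (∑ x, f x) * (∑ y, f y) := (Finset.sum_mul_sum _ _ _ _).symm
      _ ≤ 1 := by nlinarith
  -- pointwise splitting bound
  have hpt : ∀ x y : PhaseSpace n, f x * f y * f (x + y) ≤
      (if x ∈ F ∧ y ∈ F ∧ x + y ∈ F then f x * f y * f (x + y) else 0)
      + B * (f y * f (x + y)) + B * (f x * f (x + y)) + B * (f x * f y) := by
    intro x y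
    have n1 : 0 ≤ B * (f y * f (x + y)) := mul_nonneg hB (mul_nonneg (hf0 y) (hf0 (x + y)))
    have n2 : 0 ≤ B * (f x * f (x + y)) := mul_nonneg hB (mul_nonneg (hf0 x) (hf0 (x + y)))
    have n3 : 0 ≤ B * (f x * f y) := mul_nonneg hB (mul_nonneg (hf0 x) (hf0 y))
    by_cases h : x ∈ F ∧ y ∈ F ∧ x + y ∈ F
    · rw [if_pos h]; linarith
    · rw [if_neg h]
      rcases not_and_or.mp h with h1 | h23
      · have := hnotF x h1
        nlinarith [mul_nonneg (hf0 y) (hf0 (x + y))]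
      · rcases not_and_or.mp h23 with h2 | h3
        · have := hnotF y h2
          nlinarith [mul_nonneg (hf0 x) (hf0 (x + y))]
        · have := hnotF (x + y) h3
          nlinarith [mul_nonneg (hf0 x) (hf0 y)]
  -- good sum as a double sum
  have hGoodEq : GS = ∑ x, ∑ y,
      (if x ∈ F ∧ y ∈ F ∧ x + y ∈ F then f x * f y * f (x + y) else 0) := by
    rw [hGSdef, hGdef, Finset.sum_filter]
    exact Fintype.sum_prod_type _
  -- main splitting estimate
  have hsplit : ∑ x, ∑ y, f x * f y * f (x + y) ≤ GS + 3 * B := by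
    have step : ∑ x, ∑ y, f x * f y * f (x + y) ≤
        (∑ x, ∑ y, (if x ∈ F ∧ y ∈ F ∧ x + y ∈ F then f x * f y * f (x + y) else 0))
        + (∑ x, ∑ y, B * (f y * f (x + y)))
        + (∑ x, ∑ y, B * (f x * f (x + y)))
        + (∑ x, ∑ y, B * (f x * f y)) := by
      have := Finset.sum_le_sum (fun x (_ : x ∈ Finset.univ) =>
        Finset.sum_le_sum (fun y (_ : y ∈ Finset.univ) => hpt x y))
      simpa [Finset.sum_add_distrib] using this
    have e1 : ∑ x, ∑ y, B * (f y * f (x + y)) ≤ B := by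
      calc ∑ x, ∑ y, B * (f y * f (x + y)) = B * ∑ x, ∑ y, f y * f (x + y) := by
            simp [Finset.mul_sum]
        _ ≤ B * 1 := by
            apply mul_le_mul_of_nonneg_left hd1 hB
        _ = B := mul_one B
    have e2 : ∑ x, ∑ y, B * (f x * f (x + y)) ≤ B := by
      calc ∑ x, ∑ y, B * (f x * f (x + y)) = B * ∑ x, ∑ y, f x * f (x + y) := by
            simp [Finset.mul_sum]
        _ ≤ B * 1 := mul_le_mul_of_nonneg_left hd2 hB
        _ = B := mul_one B
    have e3 : ∑ x : PhaseSpace n, ∑ y : PhaseSpace n, B * (f x * f y) ≤ B := by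
      calc ∑ x : PhaseSpace n, ∑ y : PhaseSpace n, B * (f x * f y)
          = B * ∑ x : PhaseSpace n, ∑ y : PhaseSpace n, f x * f y := by
            simp [Finset.mul_sum]
        _ ≤ B * 1 := mul_le_mul_of_nonneg_left hd3 hB
        _ = B := mul_one B
    rw [hGoodEq]
    linarith
  -- γ ≤ 1
  have hγ1 : γ ≤ 1 := by
    have hTub : ∑ x, ∑ y, f x * f y * f (x + y) ≤ 1 / N := by
      have : ∑ x, ∑ y, f x * f y * f (x + y) ≤
          ∑ x, ∑ y, f x * f y * (1 / N) := by
        refine Finset.sum_le_sum fun x _ => Finset.sum_le_sum fun y _ => ?_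
        exact mul_le_mul_of_nonneg_left (hf1' (x + y)) (mul_nonneg (hf0 x) (hf0 y))
      calc ∑ x, ∑ y, f x * f y * f (x + y) ≤ ∑ x, ∑ y, f x * f y * (1 / N) := this
        _ = (∑ x : PhaseSpace n, ∑ y : PhaseSpace n, f x * f y) * (1 / N) := by
            simp [Finset.sum_mul]
        _ ≤ 1 * (1 / N) := by
            apply mul_le_mul_of_nonneg_right hd3 (by positivity)
        _ = 1 / N := one_mul _
    have := le_trans hT (mul_le_mul_of_nonneg_left hTub hN.le)
    rw [mul_one_div, div_self hN.ne'] at this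
    exact this
  -- lower bound on GS
  have hGSlb : γ / 4 ≤ N * GS := by
    have := mul_le_mul_of_nonneg_left hsplit hN.le
    have h2 : γ ≤ N * GS + 3 * (N * B) := by nlinarith
    rw [hNB] at h2
    linarith
  -- card of G lower bound
  have hGterm : ∀ p ∈ G, f p.1 * f p.2 * f (p.1 + p.2) ≤ 1 / N ^ 3 := by
    intro p _
    have h1 := hf1' p.1; have h2 := hf1' p.2; have h3 := hf1' (p.1 + p.2)
    have := mul_le_mul (mul_le_mul h1 h2 (hf0 p.2) (by positivity))
      h3 (hf0 (p.1 + p.2)) (by positivity)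
    calc f p.1 * f p.2 * f (p.1 + p.2) ≤ 1 / N * (1 / N) * (1 / N) := this
      _ = 1 / N ^ 3 := by ring
  have hGSub : GS ≤ (G.card : ℝ) * (1 / N ^ 3) := by
    have := Finset.sum_le_card_nsmul G _ (1 / N ^ 3) hGterm
    simpa [nsmul_eq_mul] using this
  have hGcard : γ / 4 * N ^ 2 ≤ (G.card : ℝ) := by
    have h : γ / 4 ≤ (G.card : ℝ) / N ^ 2 := by
      calc γ / 4 ≤ N * GS := hGSlb
        _ ≤ N * ((G.card : ℝ) * (1 / N ^ 3)) := mul_le_mul_of_nonneg_left hGSub hN.le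
        _ = (G.card : ℝ) / N ^ 2 := by field_simp
    exact (le_div_iff₀ (by positivity)).mp h
  -- card of F upper bound
  have hFub : (F.card : ℝ) * γ ≤ 4 * N := by
    have hlow : ∀ x ∈ F, γ ≤ 4 * N * f x := by
      intro x hx
      rw [hmemF] at hx
      nlinarith
    have h1 : (F.card : ℝ) * γ ≤ ∑ x ∈ F, 4 * N * f x := by
      have := Finset.card_nsmul_le_sum F (fun x => 4 * N * f x) γ hlow
      simpa [nsmul_eq_mul] using this
    have h2 : ∑ x ∈ F, 4 * N * f x = 4 * N * ∑ x ∈ F, f x := by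
      rw [Finset.mul_sum]
    have h3 : ∑ x ∈ F, f x ≤ ∑ x, f x :=
      Finset.sum_le_sum_of_subset_of_nonneg (Finset.subset_univ F)
        (fun i _ _ => hf0 i)
    have h4 : 4 * N * ∑ x ∈ F, f x ≤ 4 * N * 1 :=
      mul_le_mul_of_nonneg_left (h3.trans hfsum) (by positivity)
    rw [mul_one] at h4
    linarith
  -- G ⊆ F ×ˢ F
  have hGF : (G.card : ℝ) ≤ (F.card : ℝ) ^ 2 := by
    have hsub : G ⊆ F ×ˢ F := by
      intro p hp
      rw [hGdef, Finset.mem_filter] at hp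
      exact Finset.mem_product.mpr ⟨hp.2.1, hp.2.2.1⟩
    have := Finset.card_le_card hsub
    have hcard : (F ×ˢ F).card = F.card * F.card := Finset.card_product F F
    rw [hcard] at this
    calc (G.card : ℝ) ≤ (F.card * F.card : ℕ) := by exact_mod_cast this
      _ = (F.card : ℝ) ^ 2 := by push_cast; ring
  have hF0 : (0:ℝ) ≤ (F.card : ℝ) := Nat.cast_nonneg _
  have hFlb : γ ^ 2 / 16 * N ≤ (F.card : ℝ) := by
    nlinarith [mul_pos hN hN, sq_nonneg ((F.card : ℝ) - γ / 4 * N)]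
  have hFpos : (0:ℝ) < (F.card : ℝ) := by nlinarith [mul_pos (mul_pos hγ hγ) hN]
  -- assemble
  refine ⟨(↑F : Set (PhaseSpace n)), ?_, ?_, ?_, ?_⟩
  · rw [show (Nat.card (↑F : Set (PhaseSpace n)) : ℝ) = F.card by
      simp [Nat.card_coe_set_eq, Set.ncard_coe_finset]]
    nlinarith
  · rw [show (Nat.card (↑F : Set (PhaseSpace n)) : ℝ) = F.card by
      simp [Nat.card_coe_set_eq, Set.ncard_coe_finset]]
    rw [div_mul_eq_mul_div, le_div_iff₀ hγ]
    linarith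
  · intro x hx
    rw [Finset.mem_coe, hmemF] at hx
    exact hx
  · have hP : Nat.card {p : PhaseSpace n × PhaseSpace n //
        p.1 ∈ (↑F : Set (PhaseSpace n)) ∧ p.2 ∈ (↑F : Set (PhaseSpace n)) ∧
          p.1 + p.2 ∈ (↑F : Set (PhaseSpace n))} = G.card := by
      rw [Nat.card_eq_fintype_card, Fintype.card_subtype]
      congr 1
    rw [hP, show (Nat.card (↑F : Set (PhaseSpace n)) : ℝ) = F.card by
      simp [Nat.card_coe_set_eq, Set.ncard_coe_finset]]
    rw [le_div_iff₀ (by positivity)]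
    have e1 : ((F.card : ℝ) * γ) * ((F.card : ℝ) * γ) ≤ (4 * N) * (4 * N) :=
      mul_le_mul hFub hFub (by positivity) (by positivity)
    have e2 : γ ^ 3 * (((F.card : ℝ) * γ) * ((F.card : ℝ) * γ)) ≤
        γ ^ 3 * ((4 * N) * (4 * N)) :=
      mul_le_mul_of_nonneg_left e1 (by positivity)
    have hγ3 : γ ^ 3 ≤ γ := by
      nlinarith [mul_nonneg (mul_nonneg hγ.le (sub_nonneg.mpr hγ1))
        (by linarith : (0:ℝ) ≤ 1 + γ)]
    have e3 : γ ^ 3 * ((4 * N) * (4 * N)) ≤ γ * ((4 * N) * (4 * N)) :=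
      mul_le_mul_of_nonneg_right hγ3 (by positivity)
    nlinarith [e2, e3, hGcard]
end

section
/- Let f : 𝔽₂^{2n} → ℝ satisfy 0 ≤ f(x) ≤ 2^{-n} for all x and Σ_{x ∈ 𝔽₂^{2n}} f(x) ≤ 1, and let M := {x ∈ 𝔽₂^{2n} : 2^n f(x) > 1/2}. Then Σ_{x ∈ M} f(x) ≥ (4 · (4^n · Σ_{x ∈ 𝔽₂^{2n}} f(x)³) − 1) / 3. -/
open scoped BigOperators ComplexOrder

/-- If 0 ≤ f ≤ 2^{-n} and ∑ f ≤ 1, then for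
M := {x : 2^n f(x) > 1/2} we have
∑_{x ∈ M} f(x) ≥ (4 (4^n ∑_x f(x)³) − 1)/3. -/
theorem sum_on_large_values_ge {n : ℕ} (f : PhaseSpace n → ℝ)
    (hf0 : ∀ x, 0 ≤ f x) (hf1 : ∀ x, f x ≤ 1 / 2 ^ n)
    (hsum : ∑ x, f x ≤ 1) :
    ∑ x, Set.indicator {x : PhaseSpace n | (1 : ℝ) / 2 < 2 ^ n * f x} f x
      ≥ (4 * (4 ^ n * ∑ x, (f x) ^ 3) - 1) / 3 := by
  set M := {x : PhaseSpace n | (1 : ℝ) / 2 < 2 ^ n * f x} with hM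
  have key : ∀ x, 4 * ((4 : ℝ) ^ n * (f x) ^ 3) ≤ f x + 3 * Set.indicator M f x := by
    intro x
    have ht0 : (0 : ℝ) ≤ 2 ^ n * f x := mul_nonneg (by positivity) (hf0 x)
    have ht1 : (2 : ℝ) ^ n * f x ≤ 1 := by
      have h := hf1 x
      have h2 : (0 : ℝ) < 2 ^ n := by positivity
      rw [le_div_iff₀ h2] at h
      nlinarith
    have h4 : (4 : ℝ) ^ n * (f x) ^ 3 = (2 ^ n * f x) ^ 2 * f x := by
      have h44 : (4 : ℝ) ^ n = (2 ^ n) ^ 2 := by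
        rw [show (4 : ℝ) = 2 ^ 2 by norm_num, ← pow_mul, ← pow_mul, Nat.mul_comm]
      rw [h44]; ring
    rw [h4]
    by_cases hx : x ∈ M
    · rw [Set.indicator_of_mem hx]
      have hsq : ((2 : ℝ) ^ n * f x) ^ 2 ≤ 1 := by nlinarith
      have h5 := mul_le_of_le_one_left (hf0 x) hsq
      linarith
    · rw [Set.indicator_of_notMem hx]
      have hle : (2 : ℝ) ^ n * f x ≤ 1 / 2 := by
        simp only [hM, Set.mem_setOf_eq, not_lt] at hx
        exact hx
      have hsq : ((2 : ℝ) ^ n * f x) ^ 2 ≤ 1 / 4 := by nlinarith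
      have h5 := mul_le_mul_of_nonneg_right hsq (hf0 x)
      linarith
  have hsum2 : ∑ x, 4 * ((4 : ℝ) ^ n * (f x) ^ 3)
      ≤ ∑ x, (f x + 3 * Set.indicator M f x) :=
    Finset.sum_le_sum fun x _ => key x
  rw [Finset.sum_add_distrib, ← Finset.mul_sum, ← Finset.mul_sum] at hsum2
  have h3 : ∑ x, 3 * Set.indicator M f x = 3 * ∑ x, Set.indicator M f x :=
    (Finset.mul_sum _ _ _).symm
  rw [h3] at hsum2
  linarith
end
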